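/- arXiv:0912.1266 — 3 statements merged into one kernel-verified Lean document; each statement's English description precedes it below -/
import Mathlib

section
/- Let S be a semigroup, let T be a subsemigroup of S with finite Green index, and let {H_i : i ∈ I} be the ℋ^T-classes contained in S \ T. Then S is finitely generated if and only if T is finitely generated; and in that case every relative Schützenberger group Γ(H_i) = Stab(H_i)/γ(H_i), i ∈ I, is finitely generated as well. -/
namespace GreenIndexPaper

variable {S : Type*} [Semigroup S]

/-- The subset `u·T¹ = {u} ∪ uT` of `S` (equivalently, `u T¹` computed in `S¹`). -/
def rset (T : Subsemigroup S) (u : S) : Set S := insert u {x | ∃ t ∈ T, x = u * t}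

/-- The subset `T¹·u = {u} ∪ Tu` of `S`. -/
def lset (T : Subsemigroup S) (u : S) : Set S := insert u {x | ∃ t ∈ T, x = t * u}

/-- The relative Green relation `ℛ^T`. -/
def RrelT (T : Subsemigroup S) (u v : S) : Prop := rset T u = rset T v

/-- The relative Green relation `ℒ^T`. -/
def LrelT (T : Subsemigroup S) (u v : S) : Prop := lset T u = lset T v

/-- The relative Green relation `ℋ^T = ℛ^T ∩ ℒ^T`. -/
def HrelT (T : Subsemigroup S) (u v : S) : Prop := RrelT T u v ∧ LrelT T u v

/-- `H` is an `ℋ^T`-class of `S`. -/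
def IsHClassIn (T : Subsemigroup S) (H : Set S) : Prop := ∃ a : S, H = {x | HrelT T a x}

/-- `T` has finite Green index in `S`: the complement `S \ T` is a union of finitely many
`ℋ^T`-classes. -/
def FiniteGreenIndex (T : Subsemigroup S) : Prop :=
  ∃ F : Finset S, (∀ c ∈ F, c ∉ T) ∧ ∀ s : S, s ∉ T → ∃ c ∈ F, HrelT T s c

/-- The subset `T¹ = T ∪ {1}` of `S¹ = WithOne S`. -/
def T1 (T : Subsemigroup S) : Set (WithOne S) := insert 1 ((↑) '' (T : Set S))

/-- The subset `H·t` of `S¹`, for `H ⊆ S` and `t ∈ S¹`. -/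
def setMulR (H : Set S) (t : WithOne S) : Set (WithOne S) :=
  {x | ∃ h ∈ H, x = (h : WithOne S) * t}

/-- The stabilizer `Stab(H) = {t ∈ T¹ : Ht = H}`, as a subset of `S¹`. -/
def stabSet (T : Subsemigroup S) (H : Set S) : Set (WithOne S) :=
  {t | t ∈ T1 T ∧ setMulR H t = (↑) '' H}

theorem one_mem_stabSet (T : Subsemigroup S) (H : Set S) : (1 : WithOne S) ∈ stabSet T H := by
  refine ⟨Set.mem_insert _ _, ?_⟩
  ext x
  constructor
  · rintro ⟨h, hh, rfl⟩
    exact ⟨h, hh, (mul_one _).symm⟩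
  · rintro ⟨h, hh, rfl⟩
    exact ⟨h, hh, (mul_one _).symm⟩

theorem mul_mem_stabSet {T : Subsemigroup S} {H : Set S} {s t : WithOne S}
    (hs : s ∈ stabSet T H) (ht : t ∈ stabSet T H) : s * t ∈ stabSet T H := by
  obtain ⟨hsT, hsH⟩ := hs
  obtain ⟨htT, htH⟩ := ht
  constructor
  · rcases hsT with rfl | ⟨s', hs', rfl⟩
    · rwa [one_mul]
    · rcases htT with rfl | ⟨t', ht', rfl⟩
      · rw [mul_one]; exact Or.inr ⟨s', hs', rfl⟩
      · exact Or.inr ⟨s' * t', T.mul_mem hs' ht', rfl⟩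
  · ext x
    constructor
    · rintro ⟨h, hh, rfl⟩
      have h1 : (h : WithOne S) * s ∈ setMulR H s := ⟨h, hh, rfl⟩
      rw [hsH] at h1
      obtain ⟨g, hg, hgs⟩ := h1
      have h2 : (g : WithOne S) * t ∈ setMulR H t := ⟨g, hg, rfl⟩
      rw [htH] at h2
      obtain ⟨k, hk, hkt⟩ := h2
      refine ⟨k, hk, ?_⟩
      rw [hkt, hgs, ← mul_assoc]
    · rintro ⟨k, hk, rfl⟩
      have h2 : ((k : WithOne S)) ∈ setMulR H t := by
        rw [htH]; exact ⟨k, hk, rfl⟩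
      obtain ⟨g, hg, hgt⟩ := h2
      have h1 : ((g : WithOne S)) ∈ setMulR H s := by
        rw [hsH]; exact ⟨g, hg, rfl⟩
      obtain ⟨h, hh, hhs⟩ := h1
      exact ⟨h, hh, by rw [hgt, hhs, mul_assoc]⟩

/-- The stabilizer `Stab(H)` as a submonoid of `S¹`. -/
def stabSubmonoid (T : Subsemigroup S) (H : Set S) : Submonoid (WithOne S) where
  carrier := stabSet T H
  one_mem' := one_mem_stabSet T H
  mul_mem' := mul_mem_stabSet

/-- The Schützenberger congruence `γ(H)` on `Stab(H)`. -/
def gammaCon (T : Subsemigroup S) (H : Set S) : Con (stabSubmonoid T H) where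
  r x y := ∀ h ∈ H, (h : WithOne S) * (x : WithOne S) = (h : WithOne S) * (y : WithOne S)
  iseqv := ⟨fun _ _ _ => rfl, fun hxy h hh => (hxy h hh).symm,
    fun h1 h2 h hh => (h1 h hh).trans (h2 h hh)⟩
  mul' := by
    rintro ⟨w, hwT, hwH⟩ ⟨x, hxT, hxH⟩ ⟨y, hyT, hyH⟩ ⟨z, hzT, hzH⟩ hwx hyz h hh
    have h1 : (h : WithOne S) * w ∈ setMulR H w := ⟨h, hh, rfl⟩
    rw [hwH] at h1
    obtain ⟨g, hg, hgw⟩ := h1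
    have key : (h : WithOne S) * (w * y) = (h : WithOne S) * (x * z) := by
      calc (h : WithOne S) * (w * y) = ((h : WithOne S) * w) * y := by rw [mul_assoc]
        _ = (g : WithOne S) * y := by rw [hgw]
        _ = (g : WithOne S) * z := hyz g hg
        _ = ((h : WithOne S) * w) * z := by rw [hgw]
        _ = ((h : WithOne S) * x) * z := by rw [hwx h hh]
        _ = (h : WithOne S) * (x * z) := by rw [mul_assoc]
    exact key

/-- The relative Schützenberger group `Γ(H) = Stab(H)/γ(H)`. -/
abbrev SchGroup (T : Subsemigroup S) (H : Set S) := (gammaCon T H).Quotient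

/-- Representatives `h_i` for `i ∈ I¹ = I ∪ {1}`, with `h_1 = 1 ∈ S¹`. -/
def repOne {ι : Type*} (h : ι → S) : Option ι → WithOne S :=
  fun o => o.elim 1 fun i => (h i : WithOne S)

/-- `S` is finitely presented as a semigroup. -/
def SemigroupFP (S : Type*) [Semigroup S] : Prop :=
  ∃ (n : ℕ) (π : FreeSemigroup (Fin n) →ₙ* S), Function.Surjective π ∧
    ∃ R : Finset (FreeSemigroup (Fin n) × FreeSemigroup (Fin n)),
      ∀ u v, (conGen fun x y => (x, y) ∈ R) u v ↔ π u = π v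

/-- `M` is finitely presented as a monoid. -/
def MonoidFP (M : Type*) [Monoid M] : Prop :=
  ∃ (n : ℕ) (π : FreeMonoid (Fin n) →* M), Function.Surjective π ∧
    ∃ R : Finset (FreeMonoid (Fin n) × FreeMonoid (Fin n)),
      ∀ u v, (conGen fun x y => (x, y) ∈ R) u v ↔ π u = π v

/-- A left ideal of a semigroup. -/
def IsLeftIdeal (L : Set S) : Prop := L.Nonempty ∧ ∀ s : S, ∀ x ∈ L, s * x ∈ L

/-- A right ideal of a semigroup. -/
def IsRightIdeal (R : Set S) : Prop := R.Nonempty ∧ ∀ s : S, ∀ x ∈ R, x * s ∈ R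

/-- Residual finiteness: distinct elements can be separated by a homomorphism
into a finite semigroup. -/
def ResiduallyFiniteMul (M : Type*) [Mul M] : Prop :=
  ∀ x y : M, x ≠ y → ∃ (F : Type) (_ : Semigroup F) (_ : Finite F) (φ : M →ₙ* F), φ x ≠ φ y

/-- `T` has finite Green index inside the subsemigroup `Ssub` of the ambient semigroup:
`Ssub \ T` is a union of finitely many `ℋ^T`-classes. -/
def FiniteGreenIndexIn (Ssub T : Subsemigroup S) : Prop :=
  ∃ F : Finset S, (∀ c ∈ F, c ∈ Ssub ∧ c ∉ T) ∧ ∀ s ∈ Ssub, s ∉ T → ∃ c ∈ F, HrelT T s c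

/-- A subsemigroup is a group under the induced operation. -/
def IsGroupSub (T : Subsemigroup S) : Prop :=
  ∃ e ∈ T, (∀ t ∈ T, e * t = t ∧ t * e = t) ∧ ∀ t ∈ T, ∃ t' ∈ T, t * t' = e ∧ t' * t = e

/-- The (out-)ball of radius `n`: elements expressible as a product of at most `n`
(and at least one) elements of `A`. -/
def ball (A : Finset S) (n : ℕ) : Set S :=
  {s | ∃ l : List S, l ≠ [] ∧ l.length ≤ n ∧ (∀ x ∈ l, x ∈ A) ∧
    (l.map ((↑) : S → WithOne S)).prod = (s : WithOne S)}

/-- The growth function of a semigroup with respect to a finite set `A`. -/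
noncomputable def growth (A : Finset S) (n : ℕ) : ℕ := (ball A n).ncard

section Aux
variable {T : Subsemigroup S}

lemma mem_rset_self (T : Subsemigroup S) (u : S) : u ∈ rset T u := Set.mem_insert _ _
lemma mem_lset_self (T : Subsemigroup S) (u : S) : u ∈ lset T u := Set.mem_insert _ _

lemma mul_mem_rset {t : S} (u : S) (ht : t ∈ T) : u * t ∈ rset T u :=
  Set.mem_insert_iff.mpr (Or.inr ⟨t, ht, rfl⟩)

lemma mul_mem_lset {t : S} (u : S) (ht : t ∈ T) : t * u ∈ lset T u :=
  Set.mem_insert_iff.mpr (Or.inr ⟨t, ht, rfl⟩)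

lemma rset_cases {z x : S} (hz : z ∈ rset T x) : z = x ∨ ∃ t ∈ T, z = x * t :=
  Set.mem_insert_iff.mp hz

lemma lset_cases {z x : S} (hz : z ∈ lset T x) : z = x ∨ ∃ t ∈ T, z = t * x :=
  Set.mem_insert_iff.mp hz

lemma rset_subset_of_mem {z x : S} (hz : z ∈ rset T x) : rset T z ⊆ rset T x := by
  rcases rset_cases hz with rfl | ⟨t, ht, rfl⟩
  · exact subset_rfl
  · rintro w hw
    rcases rset_cases hw with rfl | ⟨t', ht', rfl⟩
    · exact mul_mem_rset x ht
    · exact Set.mem_insert_iff.mpr (Or.inr ⟨t * t', T.mul_mem ht ht', mul_assoc x t t'⟩)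

lemma lset_subset_of_mem {z x : S} (hz : z ∈ lset T x) : lset T z ⊆ lset T x := by
  rcases lset_cases hz with rfl | ⟨t, ht, rfl⟩
  · exact subset_rfl
  · rintro w hw
    rcases lset_cases hw with rfl | ⟨t', ht', rfl⟩
    · exact mul_mem_lset x ht
    · exact Set.mem_insert_iff.mpr (Or.inr ⟨t' * t, T.mul_mem ht' ht, (mul_assoc t' t x).symm⟩)

lemma rset_eq_of_mem_mem {z x : S} (h1 : z ∈ rset T x) (h2 : x ∈ rset T z) :
    rset T z = rset T x :=
  Set.Subset.antisymm (rset_subset_of_mem h1) (rset_subset_of_mem h2)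

lemma rset_subset_T {x : S} (hx : x ∈ T) : rset T x ⊆ (T : Set S) := by
  rintro w hw
  rcases rset_cases hw with rfl | ⟨t, ht, rfl⟩
  exacts [hx, T.mul_mem hx ht]

lemma lset_subset_T {x : S} (hx : x ∈ T) : lset T x ⊆ (T : Set S) := by
  rintro w hw
  rcases lset_cases hw with rfl | ⟨t, ht, rfl⟩
  exacts [hx, T.mul_mem ht hx]

lemma rset_mul_left (z x : S) : rset T (z * x) = (z * ·) '' rset T x := by
  ext w
  constructor
  · intro hw
    rcases rset_cases hw with rfl | ⟨t, ht, rfl⟩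
    · exact ⟨x, mem_rset_self T x, rfl⟩
    · exact ⟨x * t, mul_mem_rset x ht, (mul_assoc z x t).symm⟩
  · rintro ⟨v, hv, rfl⟩
    rcases rset_cases hv with rfl | ⟨t, ht, rfl⟩
    · exact mem_rset_self T _
    · exact Set.mem_insert_iff.mpr (Or.inr ⟨t, ht, (mul_assoc z x t).symm⟩)

lemma lset_mul_right (x b : S) : lset T (x * b) = (· * b) '' lset T x := by
  ext w
  constructor
  · intro hw
    rcases lset_cases hw with rfl | ⟨t, ht, rfl⟩
    · exact ⟨x, mem_lset_self T x, rfl⟩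
    · exact ⟨t * x, mul_mem_lset x ht, mul_assoc t x b⟩
  · rintro ⟨v, hv, rfl⟩
    rcases lset_cases hv with rfl | ⟨t, ht, rfl⟩
    · exact mem_lset_self T _
    · exact Set.mem_insert_iff.mpr (Or.inr ⟨t, ht, mul_assoc t x b⟩)

lemma rset_mul_left_congr {x y : S} (z : S) (h : rset T x = rset T y) :
    rset T (z * x) = rset T (z * y) := by
  rw [rset_mul_left, rset_mul_left, h]

lemma lset_mul_right_congr {x y : S} (b : S) (h : lset T x = lset T y) :
    lset T (x * b) = lset T (y * b) := by
  rw [lset_mul_right, lset_mul_right, h]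

/-- Key step lemma: no `ℛ`-drop transfers along an `ℒ`-class. -/
lemma rset_step {z β b : S} (hb : b ∈ T) (hL : lset T z = lset T β)
    (hR : rset T (z * b) = rset T z) : rset T (β * b) = rset T β := by
  have hβz : β ∈ lset T z := by rw [hL]; exact mem_lset_self T β
  have hz : z ∈ rset T (z * b) := by rw [hR]; exact mem_rset_self T z
  have hmem : β ∈ rset T (β * b) := by
    rcases lset_cases hβz with rfl | ⟨v, hv, rfl⟩
    · rcases rset_cases hz with h | ⟨t, ht, h⟩
      · rw [← h]; exact mem_rset_self T _
      · exact Set.mem_insert_iff.mpr (Or.inr ⟨t, ht, h⟩)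
    · rcases rset_cases hz with h | ⟨t, ht, h⟩
      · have he : v * z * b = v * z := by rw [mul_assoc, ← h]
        rw [he]; exact mem_rset_self T _
      · refine Set.mem_insert_iff.mpr (Or.inr ⟨t, ht, ?_⟩)
        conv_lhs => rw [h]
        simp only [mul_assoc]
  exact Set.Subset.antisymm (rset_subset_of_mem (mul_mem_rset β hb)) (rset_subset_of_mem hmem)


lemma mul_foldl (x z : S) (l : List S) :
    x * l.foldl (· * ·) z = l.foldl (· * ·) (x * z) := by
  induction l generalizing z with
  | nil => rfl
  | cons c l ih =>
    simp only [List.foldl_cons]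
    rw [ih, ← mul_assoc]

lemma exists_foldl_of_mem_closure {X : Finset S} {s : S}
    (hs : s ∈ Subsemigroup.closure (X : Set S)) :
    ∃ (b : S) (l : List S), b ∈ X ∧ (∀ y ∈ l, y ∈ X) ∧ s = l.foldl (· * ·) b := by
  induction hs using Subsemigroup.closure_induction with
  | mem x hx => exact ⟨x, [], hx, by simp, rfl⟩
  | mul x y hx hy ihx ihy =>
    obtain ⟨bx, lx, hbx, hlx, rfl⟩ := ihx
    obtain ⟨by', ly, hby, hly, rfl⟩ := ihy
    refine ⟨bx, lx ++ by' :: ly, hbx, ?_, ?_⟩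
    · intro z hz
      rcases List.mem_append.mp hz with h | h
      · exact hlx z h
      · rcases List.mem_cons.mp h with rfl | h
        · exact hby
        · exact hly z h
    · rw [List.foldl_append, List.foldl_cons, mul_foldl]

lemma foldl_mem_T {l : List S} (hl : ∀ b ∈ l, b ∈ T) {z : S} (hz : z ∈ T) :
    l.foldl (· * ·) z ∈ T := by
  induction l generalizing z with
  | nil => exact hz
  | cons c l ih =>
    exact ih (fun b hb => hl b (List.mem_cons_of_mem _ hb))
      (T.mul_mem hz (hl c (List.mem_cons_self)))

lemma foldl_rset_subset {l : List S} (hl : ∀ b ∈ l, b ∈ T) (z : S) :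
    rset T (l.foldl (· * ·) z) ⊆ rset T z := by
  induction l generalizing z with
  | nil => exact subset_rfl
  | cons c l ih =>
    exact (ih (fun b hb => hl b (List.mem_cons_of_mem _ hb)) (z * c)).trans
      (rset_subset_of_mem (mul_mem_rset z (hl c (List.mem_cons_self))))

end Aux
section Aux2
variable {T : Subsemigroup S}

/-- Green-type criterion: an element of `T¹` moving one element of the class `H`
into `H` stabilizes `H` setwise. -/
lemma setMulR_eq_of_mem {H : Set S} {a : S} (hH : H = {x | HrelT T a x}) {τ : S}
    (hτ : τ ∈ T) (hy : a * τ ∈ H) : setMulR H ((τ : WithOne S)) = (↑) '' H := by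
  have hy0 : HrelT T a (a * τ) := by rw [hH] at hy; exact hy
  have hyR : rset T a = rset T (a * τ) := hy0.1
  have hyL : lset T a = lset T (a * τ) := hy0.2
  ext w
  constructor
  · rintro ⟨x, hx, rfl⟩
    have hx' : HrelT T a x := by rw [hH] at hx; exact hx
    have hmem : x * τ ∈ H := by
      rw [hH]
      refine ⟨?_, ?_⟩
      · -- rset T a = rset T (x * τ)
        have hstep := rset_step (T := T) hτ hx'.2 hyR.symm
        exact hx'.1.trans hstep.symm
      · -- lset T a = lset T (x * τ)
        have : lset T (a * τ) = lset T (x * τ) := lset_mul_right_congr τ hx'.2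
        exact hyL.trans this
    exact ⟨x * τ, hmem, (WithOne.coe_mul x τ).symm⟩
  · rintro ⟨y', hy', rfl⟩
    have hy'' : HrelT T a y' := by rw [hH] at hy'; exact hy'
    have hamem : a ∈ rset T (a * τ) := by rw [← hyR]; exact mem_rset_self T a
    have hy'L : lset T y' = lset T (a * τ) := hy''.2.symm.trans hyL
    have hy'mem : y' ∈ lset T (a * τ) := by rw [← hy'L]; exact mem_lset_self T y'
    rcases rset_cases hamem with ha | ⟨tb, htb, ha⟩
    · -- a = a * τ
      have hfix : y' * τ = y' := by
        rcases lset_cases hy'mem with h | ⟨v, hv, h⟩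
        · rw [h]; conv_lhs => rw [← ha]
        · rw [h]; conv_lhs => rw [mul_assoc, ← ha]
      exact ⟨y', hy', by rw [← WithOne.coe_mul, hfix]⟩
    · -- a = (a * τ) * tb
      have key : a * τ * tb * τ = a * τ := by conv_lhs => rw [← ha]
      have hfix : (y' * tb) * τ = y' := by
        rcases lset_cases hy'mem with h | ⟨v, hv, h⟩
        · rw [h]; exact key
        · rw [h, mul_assoc v (a * τ) tb, mul_assoc v (a * τ * tb) τ, key]
      have hmem2 : y' * tb ∈ H := by
        rw [hH]
        refine ⟨?_, ?_⟩
        · -- rset a = rset (y' * tb)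
          have h1 : y' * tb ∈ rset T y' := mul_mem_rset y' htb
          have h2 : y' ∈ rset T (y' * tb) :=
            Set.mem_insert_iff.mpr (Or.inr ⟨τ, hτ, hfix.symm⟩)
          exact hy''.1.trans (rset_eq_of_mem_mem h1 h2).symm
        · -- lset a = lset (y' * tb)
          have h1 : lset T (y' * tb) = lset T ((a * τ) * tb) := lset_mul_right_congr tb hy'L
          have h2 : a * τ * tb = a := ha.symm
          show lset T a = lset T (y' * tb)
          rw [h1, h2]
      exact ⟨y' * tb, hmem2, by rw [← WithOne.coe_mul, hfix]⟩

lemma T1_cases {g : WithOne S} (hg : g ∈ T1 T) : g = 1 ∨ ∃ τ ∈ T, g = (τ : WithOne S) := by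
  rcases Set.mem_insert_iff.mp hg with h | ⟨τ, hτ, h⟩
  · exact Or.inl h
  · exact Or.inr ⟨τ, hτ, h.symm⟩

lemma mem_T1_coe {τ : S} (hτ : τ ∈ T) : (τ : WithOne S) ∈ T1 T :=
  Set.mem_insert_iff.mpr (Or.inr ⟨τ, hτ, rfl⟩)

lemma T1_mul {g h : WithOne S} (hg : g ∈ T1 T) (hh : h ∈ T1 T) : g * h ∈ T1 T := by
  rcases T1_cases hg with rfl | ⟨τ, hτ, rfl⟩ <;> rcases T1_cases hh with rfl | ⟨σ, hσ, rfl⟩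
  · rw [one_mul]; exact Set.mem_insert _ _
  · rw [one_mul]; exact mem_T1_coe hσ
  · rw [mul_one]; exact mem_T1_coe hτ
  · rw [← WithOne.coe_mul]; exact mem_T1_coe (T.mul_mem hτ hσ)

lemma stab_of_coe {H : Set S} {a : S} (hH : H = {x | HrelT T a x}) {g : WithOne S}
    (hg1 : g ∈ T1 T) {y : S} (hy : y ∈ H) (heq : (a : WithOne S) * g = (y : WithOne S)) :
    g ∈ stabSet T H := by
  rcases T1_cases hg1 with rfl | ⟨τ, hτ, rfl⟩
  · exact one_mem_stabSet T H
  · refine ⟨mem_T1_coe hτ, ?_⟩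
    rw [← WithOne.coe_mul] at heq
    have : a * τ = y := WithOne.coe_inj.mp heq
    exact setMulR_eq_of_mem hH hτ (this ▸ hy)

end Aux2

section Part1
variable {T : Subsemigroup S}

lemma fg_T_of_fg_S (T : Subsemigroup S) (hGI : FiniteGreenIndex T)
    (A : Finset S) (hA : Subsemigroup.closure (A : Set S) = ⊤) :
    ∃ B : Finset S, (B : Set S) ⊆ (T : Set S) ∧ Subsemigroup.closure (B : Set S) = T := by
  classical
  obtain ⟨F, hF1, hF2⟩ := hGI
  have hrex : ∀ s : S, ∃ c, s ∉ T → (c ∈ F ∧ HrelT T s c) := by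
    intro s
    by_cases hs : s ∈ T
    · exact ⟨s, fun h => absurd hs h⟩
    · obtain ⟨c, hc1, hc2⟩ := hF2 s hs
      exact ⟨c, fun _ => ⟨hc1, hc2⟩⟩
  choose r hr using hrex
  have hlcex : ∀ s : S, ∃ μ, s ∉ T → (s = r s ∨ (μ ∈ T ∧ s = μ * r s)) := by
    intro s
    by_cases hs : s ∈ T
    · exact ⟨s, fun h => absurd hs h⟩
    · have hL : lset T s = lset T (r s) := ((hr s hs).2).2
      have hmem : s ∈ lset T (r s) := by rw [← hL]; exact mem_lset_self T s
      rcases lset_cases hmem with h | ⟨t, ht, h⟩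
      · exact ⟨s, fun _ => Or.inl h⟩
      · exact ⟨t, fun _ => Or.inr ⟨ht, h⟩⟩
  choose lc hlc using hlcex
  have hrcex : ∀ s : S, ∃ ρ, s ∉ T → (s = r s ∨ (ρ ∈ T ∧ s = r s * ρ)) := by
    intro s
    by_cases hs : s ∈ T
    · exact ⟨s, fun h => absurd hs h⟩
    · have hR : rset T s = rset T (r s) := ((hr s hs).2).1
      have hmem : s ∈ rset T (r s) := by rw [← hR]; exact mem_rset_self T s
      rcases rset_cases hmem with h | ⟨t, ht, h⟩
      · exact ⟨s, fun _ => Or.inl h⟩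
      · exact ⟨t, fun _ => Or.inr ⟨ht, h⟩⟩
  choose rc hrc using hrcex
  set Sig0 : Finset S := A ∪ Finset.image₂ (· * ·) F A with hSig0def
  set G₁ : Finset S := Sig0.filter (· ∈ T) ∪ ((Sig0.filter (· ∉ T)).image lc).filter (· ∈ T)
    with hG₁def
  set Θ : Finset S := Finset.image₂ (· * ·) G₁ F with hΘdef
  set B : Finset S :=
    G₁ ∪ (Θ.filter (· ∈ T) ∪ ((Θ.filter (· ∉ T)).image rc).filter (· ∈ T)) with hBdef
  have hG₁T : (G₁ : Set S) ⊆ (T : Set S) := by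
    intro x hx
    rcases Finset.mem_union.mp (Finset.mem_coe.mp hx) with h | h
    · exact (Finset.mem_filter.mp h).2
    · exact (Finset.mem_filter.mp h).2
  have hBsub : (B : Set S) ⊆ (T : Set S) := by
    intro x hx
    rcases Finset.mem_union.mp (Finset.mem_coe.mp hx) with h | h
    · exact hG₁T (Finset.mem_coe.mpr h)
    · rcases Finset.mem_union.mp h with h | h
      · exact (Finset.mem_filter.mp h).2
      · exact (Finset.mem_filter.mp h).2
  have hmemG₁_T : ∀ {σ : S}, σ ∈ Sig0 → σ ∈ T → σ ∈ G₁ := fun hσ hT =>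
    Finset.mem_union_left _ (Finset.mem_filter.mpr ⟨hσ, hT⟩)
  have hmemG₁_lc : ∀ {σ : S}, σ ∈ Sig0 → σ ∉ T → lc σ ∈ T → lc σ ∈ G₁ := fun h1 h2 h3 =>
    Finset.mem_union_right _ (Finset.mem_filter.mpr
      ⟨Finset.mem_image_of_mem lc (Finset.mem_filter.mpr ⟨h1, h2⟩), h3⟩)
  have hAS0 : ∀ {a : S}, a ∈ A → a ∈ Sig0 := fun h => Finset.mem_union_left _ h
  have hFAS0 : ∀ {h a : S}, h ∈ F → a ∈ A → h * a ∈ Sig0 := fun hh ha =>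
    Finset.mem_union_right _ (Finset.mem_image₂_of_mem hh ha)
  have hcl₁T : Subsemigroup.closure (G₁ : Set S) ≤ T := Subsemigroup.closure_le.mpr hG₁T
  have hclBT : Subsemigroup.closure (B : Set S) ≤ T := Subsemigroup.closure_le.mpr hBsub
  have hcl₁B : Subsemigroup.closure (G₁ : Set S) ≤ Subsemigroup.closure (B : Set S) :=
    Subsemigroup.closure_mono (fun x hx =>
      Finset.mem_coe.mpr (Finset.mem_union_left _ (Finset.mem_coe.mp hx)))
  -- Lemma E
  have hE : ∀ (u : S), u ∈ Subsemigroup.closure (G₁ : Set S) → ∀ c ∈ F,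
      (u * c ∈ T → u * c ∈ Subsemigroup.closure (B : Set S)) ∧
      (u * c ∉ T → ∃ c' ∈ F, rset T (u * c) = rset T c' ∧
        (u * c = c' ∨ ∃ ρ ∈ Subsemigroup.closure (B : Set S), u * c = c' * ρ)) := by
    intro u hu
    induction hu using Subsemigroup.closure_induction with
    | mem x hx =>
      intro c hc
      have hxG : x ∈ G₁ := Finset.mem_coe.mp hx
      have hΘm : x * c ∈ Θ := Finset.mem_image₂_of_mem hxG hc
      constructor
      · intro hT
        exact Subsemigroup.subset_closure (Finset.mem_coe.mpr (Finset.mem_union_right _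
          (Finset.mem_union_left _ (Finset.mem_filter.mpr ⟨hΘm, hT⟩))))
      · intro hnT
        refine ⟨r (x * c), (hr _ hnT).1, ((hr _ hnT).2).1, ?_⟩
        rcases hrc (x * c) hnT with h | ⟨hρ, h⟩
        · exact Or.inl h
        · refine Or.inr ⟨rc (x * c), Subsemigroup.subset_closure ?_, h⟩
          exact Finset.mem_coe.mpr (Finset.mem_union_right _ (Finset.mem_union_right _
            (Finset.mem_filter.mpr
              ⟨Finset.mem_image_of_mem rc (Finset.mem_filter.mpr ⟨hΘm, hnT⟩), hρ⟩)))
    | mul x y hx hy ihx ihy =>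
      intro c hc
      have hxT : x ∈ T := hcl₁T hx
      by_cases hw : y * c ∈ T
      · constructor
        · intro _
          have hyB : y * c ∈ Subsemigroup.closure (B : Set S) := (ihy c hc).1 hw
          rw [mul_assoc]
          exact mul_mem (hcl₁B hx) hyB
        · intro hn
          exact absurd (by rw [mul_assoc]; exact T.mul_mem hxT hw) hn
      · obtain ⟨c', hc'F, hrw, hwd⟩ := (ihy c hc).2 hw
        have hv1r : rset T (x * y * c) = rset T (x * c') := by
          rw [mul_assoc]; exact rset_mul_left_congr x hrw
        have hvd : x * y * c = x * c' ∨
            ∃ ρ ∈ Subsemigroup.closure (B : Set S), x * y * c = (x * c') * ρ := by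
          rcases hwd with h | ⟨ρ, hρ, h⟩
          · left; rw [mul_assoc, h]
          · right; exact ⟨ρ, hρ, by rw [mul_assoc, h, ← mul_assoc]⟩
        constructor
        · intro hvT
          have hv1T : x * c' ∈ T := by
            have h1 : x * c' ∈ rset T (x * c') := mem_rset_self T _
            rw [← hv1r] at h1
            exact rset_subset_T hvT h1
          have hv1B : x * c' ∈ Subsemigroup.closure (B : Set S) := (ihx c' hc'F).1 hv1T
          rcases hvd with h | ⟨ρ, hρ, h⟩
          · rw [h]; exact hv1B
          · rw [h]; exact mul_mem hv1B hρ
        · intro hvnT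
          have hv1nT : x * c' ∉ T := by
            intro hv1T
            rcases hvd with h | ⟨ρ, hρ, h⟩
            · exact hvnT (h ▸ hv1T)
            · exact hvnT (by rw [h]; exact T.mul_mem hv1T (hclBT hρ))
          obtain ⟨c'', hc''F, hr2, hd2⟩ := (ihx c' hc'F).2 hv1nT
          refine ⟨c'', hc''F, hv1r.trans hr2, ?_⟩
          rcases hvd with h | ⟨ρ, hρ, h⟩ <;> rcases hd2 with h2 | ⟨ρ₁, hρ₁, h2⟩
          · left; rw [h, h2]
          · right; exact ⟨ρ₁, hρ₁, by rw [h, h2]⟩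
          · right; exact ⟨ρ, hρ, by rw [h, h2]⟩
          · right; exact ⟨ρ₁ * ρ, mul_mem hρ₁ hρ, by rw [h, h2, mul_assoc]⟩
  -- scan invariant
  have hbase : ∀ a ∈ A, (a ∈ Subsemigroup.closure (G₁ : Set S) ∨
      ∃ x h, h ∈ F ∧ x ∉ T ∧ lset T x = lset T h ∧
        (x = h ∨ ∃ l ∈ Subsemigroup.closure (G₁ : Set S), x = l * h) ∧
        (a = x ∨ ∃ g ∈ Subsemigroup.closure (G₁ : Set S), a = g * x)) := by
    intro a ha
    by_cases haT : a ∈ T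
    · exact Or.inl (Subsemigroup.subset_closure (Finset.mem_coe.mpr (hmemG₁_T (hAS0 ha) haT)))
    · refine Or.inr ⟨a, r a, (hr a haT).1, haT, ((hr a haT).2).2, ?_, Or.inl rfl⟩
      rcases hlc a haT with h | ⟨hμ, h⟩
      · exact Or.inl h
      · exact Or.inr ⟨lc a, Subsemigroup.subset_closure
          (Finset.mem_coe.mpr (hmemG₁_lc (hAS0 ha) haT hμ)), h⟩
  have hstep : ∀ s, (s ∈ Subsemigroup.closure (G₁ : Set S) ∨
      ∃ x h, h ∈ F ∧ x ∉ T ∧ lset T x = lset T h ∧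
        (x = h ∨ ∃ l ∈ Subsemigroup.closure (G₁ : Set S), x = l * h) ∧
        (s = x ∨ ∃ g ∈ Subsemigroup.closure (G₁ : Set S), s = g * x)) →
      ∀ a ∈ A, (s * a ∈ Subsemigroup.closure (G₁ : Set S) ∨
      ∃ x h, h ∈ F ∧ x ∉ T ∧ lset T x = lset T h ∧
        (x = h ∨ ∃ l ∈ Subsemigroup.closure (G₁ : Set S), x = l * h) ∧
        (s * a = x ∨ ∃ g ∈ Subsemigroup.closure (G₁ : Set S), s * a = g * x)) := by
    intro s hs a ha
    rcases hs with hs | ⟨x, h, hhF, hxT, hxL, hxd, hsd⟩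
    · by_cases haT : a ∈ T
      · exact Or.inl (mul_mem hs (Subsemigroup.subset_closure
          (Finset.mem_coe.mpr (hmemG₁_T (hAS0 ha) haT))))
      · refine Or.inr ⟨a, r a, (hr a haT).1, haT, ((hr a haT).2).2, ?_,
          Or.inr ⟨s, hs, rfl⟩⟩
        rcases hlc a haT with h' | ⟨hμ, h'⟩
        · exact Or.inl h'
        · exact Or.inr ⟨lc a, Subsemigroup.subset_closure
            (Finset.mem_coe.mpr (hmemG₁_lc (hAS0 ha) haT hμ)), h'⟩
    · have hsgS0 : h * a ∈ Sig0 := hFAS0 hhF ha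
      have hLxa : lset T (x * a) = lset T (h * a) := lset_mul_right_congr a hxL
      by_cases hσT : h * a ∈ T
      · -- crossing: absorb the tail
        have hxaT : x * a ∈ T := by
          have h1 : x * a ∈ lset T (h * a) := by rw [← hLxa]; exact mem_lset_self T _
          exact lset_subset_T hσT h1
        have hσG : h * a ∈ Subsemigroup.closure (G₁ : Set S) :=
          Subsemigroup.subset_closure (Finset.mem_coe.mpr (hmemG₁_T hsgS0 hσT))
        have hxacl : x * a ∈ Subsemigroup.closure (G₁ : Set S) := by
          rcases hxd with rfl | ⟨l, hl, rfl⟩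
          · exact hσG
          · rw [mul_assoc]; exact mul_mem hl hσG
        left
        rcases hsd with rfl | ⟨g, hg, rfl⟩
        · exact hxacl
        · rw [mul_assoc]; exact mul_mem hg hxacl
      · right
        have hxanT : x * a ∉ T := by
          intro hmem'
          have h1 : h * a ∈ lset T (x * a) := by rw [hLxa]; exact mem_lset_self T _
          exact hσT (lset_subset_T hmem' h1)
        refine ⟨x * a, r (h * a), (hr _ hσT).1, hxanT, hLxa.trans ((hr _ hσT).2).2, ?_, ?_⟩
        · rcases hxd with hxe | ⟨l, hl, hxe⟩ <;> rcases hlc (h * a) hσT with h' | ⟨hμ, h'⟩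
          · exact Or.inl (by rw [hxe]; exact h')
          · exact Or.inr ⟨lc (h * a), Subsemigroup.subset_closure
              (Finset.mem_coe.mpr (hmemG₁_lc hsgS0 hσT hμ)), by rw [hxe]; exact h'⟩
          · exact Or.inr ⟨l, hl, by rw [hxe, mul_assoc]; exact congrArg (l * ·) h'⟩
          · exact Or.inr ⟨l * lc (h * a), mul_mem hl (Subsemigroup.subset_closure
              (Finset.mem_coe.mpr (hmemG₁_lc hsgS0 hσT hμ))),
              by rw [hxe, mul_assoc, mul_assoc]; exact congrArg (l * ·) h'⟩
        · rcases hsd with rfl | ⟨g, hg, rfl⟩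
          · exact Or.inl rfl
          · exact Or.inr ⟨g, hg, mul_assoc g x a⟩
  have hall : ∀ s : S, (s ∈ Subsemigroup.closure (G₁ : Set S) ∨
      ∃ x h, h ∈ F ∧ x ∉ T ∧ lset T x = lset T h ∧
        (x = h ∨ ∃ l ∈ Subsemigroup.closure (G₁ : Set S), x = l * h) ∧
        (s = x ∨ ∃ g ∈ Subsemigroup.closure (G₁ : Set S), s = g * x)) := by
    have haux : ∀ (l : List S), (∀ y ∈ l, y ∈ A) → ∀ z : S,
        (z ∈ Subsemigroup.closure (G₁ : Set S) ∨
          ∃ x h, h ∈ F ∧ x ∉ T ∧ lset T x = lset T h ∧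
            (x = h ∨ ∃ l' ∈ Subsemigroup.closure (G₁ : Set S), x = l' * h) ∧
            (z = x ∨ ∃ g ∈ Subsemigroup.closure (G₁ : Set S), z = g * x)) →
        (l.foldl (· * ·) z ∈ Subsemigroup.closure (G₁ : Set S) ∨
          ∃ x h, h ∈ F ∧ x ∉ T ∧ lset T x = lset T h ∧
            (x = h ∨ ∃ l' ∈ Subsemigroup.closure (G₁ : Set S), x = l' * h) ∧
            (l.foldl (· * ·) z = x ∨
              ∃ g ∈ Subsemigroup.closure (G₁ : Set S), l.foldl (· * ·) z = g * x)) := by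
      intro l
      induction l with
      | nil => intro _ z hz; exact hz
      | cons c l ih =>
        intro hmem z hz
        simp only [List.foldl_cons]
        exact ih (fun y hy => hmem y (List.mem_cons_of_mem _ hy)) _
          (hstep z hz c (hmem c (List.mem_cons_self)))
    intro s
    have hs : s ∈ Subsemigroup.closure (A : Set S) := by rw [hA]; exact Subsemigroup.mem_top s
    obtain ⟨b, l, hb, hl, rfl⟩ := exists_foldl_of_mem_closure hs
    exact haux l hl b (hbase b hb)
  refine ⟨B, hBsub, le_antisymm (Subsemigroup.closure_le.mpr hBsub) ?_⟩
  intro t ht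
  rcases hall t with htc | ⟨x, h, hhF, hxT, hxL, hxd, hsd⟩
  · exact hcl₁B htc
  · rcases hsd with rfl | ⟨g, hg, rfl⟩
    · exact absurd ht hxT
    · rcases hxd with hxe | ⟨l, hl, hxe⟩
      · rw [hxe] at ht ⊢
        exact (hE g hg h hhF).1 ht
      · rw [hxe, ← mul_assoc] at ht ⊢
        exact (hE (g * l) (mul_mem hg hl) h hhF).1 ht

end Part1

section Part2
variable {T : Subsemigroup S}

lemma schutz_fg (T : Subsemigroup S) (hGI : FiniteGreenIndex T)
    (B : Finset S) (hBsub : (B : Set S) ⊆ (T : Set S))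
    (hBT : Subsemigroup.closure (B : Set S) = T)
    (H : Set S) (a : S) (hH : H = {x | HrelT T a x}) (hHT : ∀ x ∈ H, x ∉ T) :
    ∃ X : Finset (WithOne S), (X : Set (WithOne S)) ⊆ stabSet T H ∧
      ∀ t ∈ stabSet T H, ∃ l : List (WithOne S), l ≠ [] ∧ (∀ x ∈ l, x ∈ X) ∧
        ∀ g ∈ H, (g : WithOne S) * t = (g : WithOne S) * l.prod := by
  classical
  obtain ⟨F, hF1, hF2⟩ := hGI
  have haH : a ∈ H := by rw [hH]; exact ⟨rfl, rfl⟩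
  have haT : a ∉ T := hHT a haH
  have hrex : ∀ s : S, ∃ c, s ∉ T → (c ∈ F ∧ HrelT T s c) := by
    intro s
    by_cases hs : s ∈ T
    · exact ⟨s, fun h => absurd hs h⟩
    · obtain ⟨c, hc1, hc2⟩ := hF2 s hs
      exact ⟨c, fun _ => ⟨hc1, hc2⟩⟩
  choose r hr using hrex
  -- state function
  have hstex : ∀ z : S, ∃ c : S, (z ∈ H → c = a) ∧ (z ∉ T →
      (lset T z = lset T c ∧ c ∈ insert a F ∧ (rset T z = rset T a → rset T a = rset T c))) := by
    intro z
    by_cases hza : HrelT T a z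
    · exact ⟨a, fun _ => rfl, fun _ => ⟨hza.2.symm, Finset.mem_insert_self a F,
        fun _ => rfl⟩⟩
    · by_cases hzT : z ∈ T
      · exact ⟨z, fun hmem => absurd (by rw [hH] at hmem; exact hmem) hza,
          fun h => absurd hzT h⟩
      · exact ⟨r z, fun hmem => absurd (by rw [hH] at hmem; exact hmem) hza,
          fun _ => ⟨((hr z hzT).2).2, Finset.mem_insert_of_mem (hr z hzT).1,
            fun hzr => hzr.symm.trans ((hr z hzT).2).1⟩⟩
  choose st hstH hstfacts using hstex
  -- connectors
  have hthex : ∀ c : S, ∃ x : WithOne S, (c = a → x = 1) ∧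
      (c ≠ a → rset T a = rset T c →
        ((∃ μ ∈ T, x = (μ : WithOne S)) ∧ (c : WithOne S) = (a : WithOne S) * x)) := by
    intro c
    by_cases hca : c = a
    · exact ⟨1, fun _ => rfl, fun h => absurd hca h⟩
    · by_cases hR : rset T a = rset T c
      · have hc : c ∈ rset T a := by rw [hR]; exact mem_rset_self T c
        rcases rset_cases hc with h | ⟨t, ht, h⟩
        · exact absurd h hca
        · exact ⟨(t : WithOne S), fun h' => absurd h' hca,
            fun _ _ => ⟨⟨t, ht, rfl⟩, by rw [h, WithOne.coe_mul]⟩⟩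
      · exact ⟨1, fun h' => absurd h' hca, fun _ h' => absurd h' hR⟩
  choose th hth using hthex
  have hthex' : ∀ c : S, ∃ x : WithOne S, (c = a → x = 1) ∧
      (c ≠ a → rset T a = rset T c →
        ((∃ μ ∈ T, x = (μ : WithOne S)) ∧ (a : WithOne S) = (c : WithOne S) * x)) := by
    intro c
    by_cases hca : c = a
    · exact ⟨1, fun _ => rfl, fun h => absurd hca h⟩
    · by_cases hR : rset T a = rset T c
      · have hc : a ∈ rset T c := by rw [← hR]; exact mem_rset_self T a
        rcases rset_cases hc with h | ⟨t, ht, h⟩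
        · exact absurd h.symm hca
        · exact ⟨(t : WithOne S), fun h' => absurd h' hca,
            fun _ _ => ⟨⟨t, ht, rfl⟩, by rw [h, WithOne.coe_mul]⟩⟩
      · exact ⟨1, fun h' => absurd h' hca, fun _ h' => absurd h' hR⟩
  choose th' hth' using hthex'
  have hthmul : ∀ c : S, (c = a ∨ (c ≠ a ∧ rset T a = rset T c)) →
      (a : WithOne S) * th c = (c : WithOne S) := by
    rintro c (rfl | ⟨hne, hR⟩)
    · rw [(hth c).1 rfl, mul_one]
    · exact (((hth c).2 hne hR).2).symm
  have hth'mul : ∀ c : S, (c = a ∨ (c ≠ a ∧ rset T a = rset T c)) →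
      (c : WithOne S) * th' c = (a : WithOne S) := by
    rintro c (rfl | ⟨hne, hR⟩)
    · rw [(hth' c).1 rfl, mul_one]
    · exact (((hth' c).2 hne hR).2).symm
  have hthT1 : ∀ c : S, (c = a ∨ (c ≠ a ∧ rset T a = rset T c)) → th c ∈ T1 T := by
    rintro c (rfl | ⟨hne, hR⟩)
    · rw [(hth c).1 rfl]; exact Set.mem_insert _ _
    · obtain ⟨⟨μ, hμ, hx⟩, _⟩ := (hth c).2 hne hR
      rw [hx]; exact mem_T1_coe hμ
  have hth'T1 : ∀ c : S, (c = a ∨ (c ≠ a ∧ rset T a = rset T c)) → th' c ∈ T1 T := by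
    rintro c (rfl | ⟨hne, hR⟩)
    · rw [(hth' c).1 rfl]; exact Set.mem_insert _ _
    · obtain ⟨⟨μ, hμ, hx⟩, _⟩ := (hth' c).2 hne hR
      rw [hx]; exact mem_T1_coe hμ
  have hth'cases : ∀ c : S, (c = a ∨ (c ≠ a ∧ rset T a = rset T c)) →
      (th' c = 1 ∧ c = a) ∨ ∃ μ ∈ T, th' c = (μ : WithOne S) ∧ a = c * μ := by
    rintro c (rfl | ⟨hne, hR⟩)
    · exact Or.inl ⟨(hth' c).1 rfl, rfl⟩
    · obtain ⟨⟨μ, hμ, hx⟩, heq⟩ := (hth' c).2 hne hR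
      refine Or.inr ⟨μ, hμ, hx, ?_⟩
      rw [hx, ← WithOne.coe_mul] at heq
      exact WithOne.coe_inj.mp heq
  have hC1 : ∀ (x c : S), lset T x = lset T c → (c = a ∨ (c ≠ a ∧ rset T a = rset T c)) →
      (x : WithOne S) * (th' c * th c) = (x : WithOne S) := by
    intro x c hx hcond
    have hxm : x ∈ lset T c := by rw [← hx]; exact mem_lset_self T x
    have h1 : (c : WithOne S) * (th' c * th c) = (c : WithOne S) := by
      rw [← mul_assoc, hth'mul c hcond, hthmul c hcond]
    rcases lset_cases hxm with h | ⟨v, hv, h⟩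
    · rw [h]; exact h1
    · rw [h, WithOne.coe_mul, mul_assoc, h1]
  have hcond : ∀ z : S, z ∉ T → rset T z = rset T a →
      (st z = a ∨ (st z ≠ a ∧ rset T a = rset T (st z))) := by
    intro z hz hzR
    by_cases h : st z = a
    · exact Or.inl h
    · exact Or.inr ⟨h, ((hstfacts z hz).2).2 hzR⟩
  -- generating set
  set X0 : Finset (WithOne S) :=
    ((insert a F) ×ˢ (B ×ˢ (insert a F))).image
      (fun p => th p.1 * (p.2.1 : WithOne S) * th' p.2.2) with hX0def
  set X : Finset (WithOne S) := insert 1 (X0.filter (· ∈ stabSet T H)) with hXdef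
  have hXsub : (X : Set (WithOne S)) ⊆ stabSet T H := by
    intro x hx
    rcases Finset.mem_insert.mp (Finset.mem_coe.mp hx) with rfl | hx'
    · exact one_mem_stabSet T H
    · exact (Finset.mem_filter.mp hx').2
  refine ⟨X, hXsub, ?_⟩
  rintro t ⟨htT1, htH⟩
  rcases T1_cases htT1 with rfl | ⟨τ, hτT, rfl⟩
  · refine ⟨[1], by simp, ?_, ?_⟩
    · intro x hx
      rw [List.mem_singleton] at hx
      rw [hx, hXdef]
      exact Finset.mem_insert_self 1 _
    · intro g _
      simp
  · -- main case : t = ↑τ with τ ∈ T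
    have haτ : a * τ ∈ H := by
      have hmem : (a : WithOne S) * (τ : WithOne S) ∈ setMulR H ((τ : WithOne S)) :=
        ⟨a, haH, rfl⟩
      rw [htH] at hmem
      obtain ⟨y, hy, hyeq⟩ := hmem
      rw [← WithOne.coe_mul, WithOne.coe_inj] at hyeq
      exact hyeq ▸ hy
    have hτcl : τ ∈ Subsemigroup.closure (B : Set S) := by rw [hBT]; exact hτT
    obtain ⟨b0, l0, hb0, hl0, hτeq⟩ := exists_foldl_of_mem_closure hτcl
    have main : ∀ (l : List S), (∀ y ∈ l, y ∈ B) → ∀ z : S, z ∉ T →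
        rset T z = rset T a → l.foldl (· * ·) z ∈ H →
        ∃ L : List (WithOne S), L.length = l.length ∧ (∀ x ∈ L, x ∈ X) ∧
          ((z : WithOne S) * th' (st z)) * L.prod = ((l.foldl (· * ·) z : S) : WithOne S) := by
      intro l
      induction l with
      | nil =>
        intro _ z hzT hzR hzH
        refine ⟨[], rfl, by simp, ?_⟩
        rw [List.prod_nil, mul_one, hstH z hzH, (hth' a).1 rfl, mul_one]
        rfl
      | cons b l ih =>
        intro hmem z hzT hzR hzH
        have hbB : b ∈ B := hmem b (List.mem_cons_self)
        have hbT : b ∈ T := hBsub hbB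
        have hlB : ∀ y ∈ l, y ∈ B := fun y hy => hmem y (List.mem_cons_of_mem _ hy)
        have hlT : ∀ y ∈ l, y ∈ T := fun y hy => hBsub (hlB y hy)
        simp only [List.foldl_cons] at hzH ⊢
        have hz'T : z * b ∉ T := fun hmem' => hHT _ hzH (foldl_mem_T hlT hmem')
        have hfH : HrelT T a (l.foldl (· * ·) (z * b)) := by rw [hH] at hzH; exact hzH
        have hz'R : rset T (z * b) = rset T a := by
          refine Set.Subset.antisymm ?_ ?_
          · rw [← hzR]
            exact rset_subset_of_mem (mul_mem_rset z hbT)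
          · rw [hfH.1]
            exact foldl_rset_subset hlT (z * b)
        obtain ⟨L, hLlen, hLX, hLeq⟩ := ih hlB (z * b) hz'T hz'R hzH
        have hcz := hcond z hzT hzR
        have hcz' := hcond (z * b) hz'T hz'R
        have hzl : lset T z = lset T (st z) := (hstfacts z hzT).1
        have hz'l : lset T (z * b) = lset T (st (z * b)) := (hstfacts (z * b) hz'T).1
        have hx1L : lset T (st z * b) = lset T (st (z * b)) :=
          (lset_mul_right_congr b hzl).symm.trans hz'l
        have hx1R : rset T (st z * b) = rset T a := by
          have hstep := rset_step (T := T) hbT hzl (hz'R.trans hzR.symm)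
          rw [hstep]
          exact (((hstfacts z hzT).2).2 hzR).symm
        have hgval : (a : WithOne S) * (th (st z) * (b : WithOne S) * th' (st (z * b))) =
            ((st z * b : S) : WithOne S) * th' (st (z * b)) := by
          rw [← mul_assoc, ← mul_assoc, hthmul (st z) hcz, ← WithOne.coe_mul]
        have hyH : ∃ y : S, y ∈ H ∧
            (a : WithOne S) * (th (st z) * (b : WithOne S) * th' (st (z * b))) =
              (y : WithOne S) := by
          rcases hth'cases (st (z * b)) hcz' with ⟨h1, h2⟩ | ⟨μ, hμ, h1, h2⟩
          · refine ⟨st z * b, ?_, by rw [hgval, h1, mul_one]⟩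
            rw [hH]
            exact ⟨hx1R.symm, (hx1L.trans (by rw [h2])).symm⟩
          · refine ⟨(st z * b) * μ, ?_, ?_⟩
            · rw [hH]
              constructor
              · have hR1 : rset T (st (z * b) * μ) = rset T (st (z * b)) := by
                  rw [← h2]
                  exact ((hstfacts (z * b) hz'T).2).2 hz'R
                have hstep2 := rset_step (T := T) hμ hx1L.symm hR1
                exact (hstep2.trans hx1R).symm
              · have l1 : lset T ((st z * b) * μ) = lset T (st (z * b) * μ) :=
                  lset_mul_right_congr μ hx1L
                have l2 : st (z * b) * μ = a := h2.symm
                exact (l1.trans (by rw [l2])).symm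
            · rw [hgval, h1, ← WithOne.coe_mul]
        obtain ⟨y, hyHm, hyeq⟩ := hyH
        have hgT1 : th (st z) * (b : WithOne S) * th' (st (z * b)) ∈ T1 T :=
          T1_mul (T1_mul (hthT1 (st z) hcz) (mem_T1_coe hbT)) (hth'T1 (st (z * b)) hcz')
        have hgstab : th (st z) * (b : WithOne S) * th' (st (z * b)) ∈ stabSet T H :=
          stab_of_coe hH hgT1 hyHm hyeq
        have hgX : th (st z) * (b : WithOne S) * th' (st (z * b)) ∈ X := by
          rw [hXdef]
          refine Finset.mem_insert_of_mem (Finset.mem_filter.mpr ⟨?_, hgstab⟩)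
          rw [hX0def]
          refine Finset.mem_image.mpr ⟨(st z, b, st (z * b)), ?_, rfl⟩
          exact Finset.mem_product.mpr ⟨(hstfacts z hzT).2.1,
            Finset.mem_product.mpr ⟨hbB, (hstfacts (z * b) hz'T).2.1⟩⟩
        refine ⟨(th (st z) * (b : WithOne S) * th' (st (z * b))) :: L, by simp [hLlen], ?_, ?_⟩
        · intro x hx
          rcases List.mem_cons.mp hx with rfl | hx
          · exact hgX
          · exact hLX x hx
        · rw [List.prod_cons, ← mul_assoc]
          have hkey : ((z : WithOne S) * th' (st z)) *
              (th (st z) * (b : WithOne S) * th' (st (z * b))) =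
              ((z * b : S) : WithOne S) * th' (st (z * b)) := by
            calc ((z : WithOne S) * th' (st z)) *
                (th (st z) * (b : WithOne S) * th' (st (z * b)))
                = ((z : WithOne S) * (th' (st z) * th (st z))) *
                    ((b : WithOne S) * th' (st (z * b))) := by
                  simp only [mul_assoc]
              _ = (z : WithOne S) * ((b : WithOne S) * th' (st (z * b))) := by
                  rw [hC1 z (st z) hzl hcz]
              _ = ((z * b : S) : WithOne S) * th' (st (z * b)) := by
                  rw [WithOne.coe_mul, mul_assoc]
          rw [hkey, hLeq]
    have hfin : (b0 :: l0).foldl (· * ·) a ∈ H := by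
      simp only [List.foldl_cons]
      rw [← mul_foldl, ← hτeq]
      exact haτ
    have hmem0 : ∀ y ∈ (b0 :: l0), y ∈ B := by
      intro y hy
      rcases List.mem_cons.mp hy with rfl | h
      exacts [hb0, hl0 y h]
    obtain ⟨L, hLlen, hLX, hLeq⟩ := main (b0 :: l0) hmem0 a haT rfl hfin
    rw [hstH a haH, (hth' a).1 rfl, mul_one] at hLeq
    have hLne : L ≠ [] := by
      intro h
      rw [h] at hLlen
      simp at hLlen
    refine ⟨L, hLne, hLX, ?_⟩
    intro g hg
    have hfoldeq : ((b0 :: l0).foldl (· * ·) a : S) = a * τ := by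
      simp only [List.foldl_cons]
      rw [← mul_foldl, ← hτeq]
    rw [hfoldeq] at hLeq
    have hat : (a : WithOne S) * (τ : WithOne S) = (a : WithOne S) * L.prod := by
      rw [← WithOne.coe_mul, ← hLeq]
    have hgl : lset T g = lset T a := by rw [hH] at hg; exact hg.2.symm
    have hgm : g ∈ lset T a := by rw [← hgl]; exact mem_lset_self T g
    rcases lset_cases hgm with h | ⟨v, hv, h⟩
    · rw [h]; exact hat
    · rw [h, WithOne.coe_mul, mul_assoc, mul_assoc, hat]

end Part2

end GreenIndexPaper

open GreenIndexPaper

/-- for `T` of finite Green index in `S`, `S` is finitely generated iff `T`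
is, in which case all relative Schützenberger groups are finitely generated. -/
theorem fg_iff_fg_of_finiteGreenIndex
    {S : Type*} [Semigroup S] (T : Subsemigroup S) (hGI : FiniteGreenIndex T) :
    ((∃ A : Finset S, Subsemigroup.closure (↑A : Set S) = ⊤) ↔
      (∃ B : Finset S, (↑B : Set S) ⊆ (T : Set S) ∧
        Subsemigroup.closure (↑B : Set S) = T)) ∧
    ((∃ A : Finset S, Subsemigroup.closure (↑A : Set S) = ⊤) →
      ∀ H : Set S, IsHClassIn T H → (∀ x ∈ H, x ∉ T) →
        ∃ X : Finset (WithOne S), (↑X : Set (WithOne S)) ⊆ stabSet T H ∧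
          ∀ t ∈ stabSet T H, ∃ l : List (WithOne S), l ≠ [] ∧ (∀ x ∈ l, x ∈ X) ∧
            ∀ g ∈ H, (g : WithOne S) * t = (g : WithOne S) * l.prod) := by
  classical
  constructor
  · constructor
    · rintro ⟨A, hA⟩
      exact fg_T_of_fg_S T hGI A hA
    · rintro ⟨B, hBsub, hBT⟩
      obtain ⟨F, hF1, hF2⟩ := hGI
      refine ⟨B ∪ F, ?_⟩
      rw [eq_top_iff]
      intro s _
      by_cases hs : s ∈ T
      · have h1 : s ∈ Subsemigroup.closure (B : Set S) := by rw [hBT]; exact hs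
        refine Subsemigroup.closure_mono ?_ h1
        rw [Finset.coe_union]
        exact Set.subset_union_left
      · obtain ⟨c, hcF, hc⟩ := hF2 s hs
        have hsr : s ∈ rset T c := by rw [← hc.1]; exact mem_rset_self T s
        have hcmem : c ∈ Subsemigroup.closure ((B ∪ F : Finset S) : Set S) :=
          Subsemigroup.subset_closure
            (by rw [Finset.coe_union]; exact Set.mem_union_right _ (Finset.mem_coe.mpr hcF))
        rcases rset_cases hsr with rfl | ⟨t, ht, rfl⟩
        · exact hcmem
        · have htmem : t ∈ Subsemigroup.closure ((B ∪ F : Finset S) : Set S) := by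
            have h2 : t ∈ Subsemigroup.closure (B : Set S) := by rw [hBT]; exact ht
            refine Subsemigroup.closure_mono ?_ h2
            rw [Finset.coe_union]
            exact Set.subset_union_left
          exact mul_mem hcmem htmem
  · intro hS H hHcl hHT
    obtain ⟨a, ha⟩ := hHcl
    obtain ⟨A, hA⟩ := hS
    obtain ⟨B, hBsub, hBT⟩ := fg_T_of_fg_S T hGI A hA
    exact schutz_fg T hGI B hBsub hBT H a ha hHT
end

section
/- Let S be a semigroup and let T be a subsemigroup of S such that the complement S \ T is finite (i.e. T has finite Rees index in S). If T is finitely presented, then S is finitely presented. -/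
open GreenIndexPaper

section AuxFP
variable {S : Type*} [Semigroup S]
open GreenIndexPaper
private lemma conGen_map {M N : Type*} [Mul M] [Mul N] (f : M →ₙ* N)
    {r : M → M → Prop} {r' : N → N → Prop}
    (h : ∀ x y, r x y → (conGen r') (f x) (f y)) {u v : M} (huv : (conGen r) u v) :
    (conGen r') (f u) (f v) :=
  (Con.conGen_le (c := Con.comap f (map_mul f) (conGen r'))).2 h huv

private lemma semigroupFP_of_fintype {Γ : Type*} [Fintype Γ]
    (σ : FreeSemigroup Γ →ₙ* S) (hσ : Function.Surjective σ)
    (R : Finset (FreeSemigroup Γ × FreeSemigroup Γ))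
    (hR : ∀ u v, (conGen fun x y => (x, y) ∈ R) u v ↔ σ u = σ v) : SemigroupFP S := by
  classical
  set N := Fintype.card Γ
  set e : Γ ≃ Fin N := Fintype.equivFin Γ
  set f : FreeSemigroup Γ →ₙ* FreeSemigroup (Fin N) := FreeSemigroup.map e
  set g : FreeSemigroup (Fin N) →ₙ* FreeSemigroup Γ := FreeSemigroup.map e.symm
  have hgf : ∀ w, g (f w) = w := by
    intro w
    have : g.comp f = MulHom.id _ := by
      apply FreeSemigroup.hom_ext
      funext x
      simp [f, g]
    calc g (f w) = g.comp f w := rfl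
      _ = w := by rw [this]; rfl
  have hfg : ∀ w, f (g w) = w := by
    intro w
    have : f.comp g = MulHom.id _ := by
      apply FreeSemigroup.hom_ext
      funext x
      simp [f, g]
    calc f (g w) = f.comp g w := rfl
      _ = w := by rw [this]; rfl
  refine ⟨N, σ.comp g, ?_, R.image (fun p => (f p.1, f p.2)), ?_⟩
  · intro s
    obtain ⟨w, hw⟩ := hσ s
    exact ⟨f w, by simp [MulHom.comp_apply, hgf, hw]⟩
  · intro u v
    constructor
    · intro h
      have : (Con.ker (σ.comp g)) u v := by
        refine Con.conGen_le.2 ?_ h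
        rintro x y hxy
        simp only [Finset.mem_image] at hxy
        obtain ⟨p, hp, heq⟩ := hxy
        have h1 : σ p.1 = σ p.2 := (hR p.1 p.2).mp (ConGen.Rel.of _ _ hp)
        have hx : x = f p.1 := (congrArg Prod.fst heq).symm
        have hy : y = f p.2 := (congrArg Prod.snd heq).symm
        show σ (g x) = σ (g y)
        rw [hx, hy, hgf, hgf, h1]
      exact this
    · intro h
      have h1 : (conGen fun x y => (x, y) ∈ R) (g u) (g v) := (hR _ _).mpr h
      have h2 := conGen_map (r' := fun x y => (x, y) ∈ R.image (fun p => (f p.1, f p.2))) f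
        (fun x y hxy => ConGen.Rel.of _ _ (Finset.mem_image_of_mem _ hxy)) h1
      rwa [hfg, hfg] at h2


private theorem semigroupFP_main (T : Subsemigroup S) (hRees : ((T : Set S)ᶜ).Finite)
    {n : ℕ} (π : FreeSemigroup (Fin n) →ₙ* T) (hsurj : Function.Surjective π)
    (R : Finset (FreeSemigroup (Fin n) × FreeSemigroup (Fin n)))
    (hR : ∀ u v, (conGen fun x y => (x, y) ∈ R) u v ↔ π u = π v) : SemigroupFP S := by
  classical
  haveI : Fintype ((T : Set S)ᶜ : Set S) := hRees.fintype
  set B : Set S := ((T : Set S)ᶜ : Set S) with hB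
  let Γ := Fin n ⊕ ↥B
  let val : Γ → S := Sum.elim (fun i => ((π (FreeSemigroup.of i) : T) : S)) (fun b => (b : S))
  let σ : FreeSemigroup Γ →ₙ* S := FreeSemigroup.lift val
  let wt : T → FreeSemigroup (Fin n) := fun t => (hsurj t).choose
  have hwt : ∀ t, π (wt t) = t := fun t => (hsurj t).choose_spec
  let ν : S → FreeSemigroup Γ := fun s =>
    if h : s ∈ T then FreeSemigroup.map Sum.inl (wt ⟨s, h⟩)
    else FreeSemigroup.of (Sum.inr ⟨s, by simpa [hB] using h⟩)
  have Emap : ∀ w : FreeSemigroup (Fin n),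
      σ (FreeSemigroup.map Sum.inl w) = ((π w : T) : S) := by
    intro w
    induction w using FreeSemigroup.recOnMul with
    | ih1 i => simp [σ, val]
    | ih2 i y hx hy =>
      simp only [map_mul]
      push_cast
      rw [hx, hy]
  have hν : ∀ s, σ (ν s) = s := by
    intro s
    by_cases h : s ∈ T
    · simp only [ν, dif_pos h, Emap, hwt]
    · simp only [ν, dif_neg h, σ, FreeSemigroup.lift_of, val, Sum.elim_inr]
  -- relation set
  let RR : Finset (FreeSemigroup Γ × FreeSemigroup Γ) :=
    R.image (fun p => (FreeSemigroup.map Sum.inl p.1, FreeSemigroup.map Sum.inl p.2)) ∪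
    (Finset.univ : Finset (Γ × Γ)).image
      (fun xy => (FreeSemigroup.of xy.1 * FreeSemigroup.of xy.2, ν (val xy.1 * val xy.2)))
  let c : Con (FreeSemigroup Γ) := conGen fun x y => (x, y) ∈ RR
  have h_inl : ∀ {u v : FreeSemigroup (Fin n)}, π u = π v →
      c (FreeSemigroup.map Sum.inl u) (FreeSemigroup.map Sum.inl v) := by
    intro u v h
    refine conGen_map (FreeSemigroup.map Sum.inl) ?_ ((hR u v).mpr h)
    intro x y hxy
    exact ConGen.Rel.of _ _ (Finset.mem_union_left _ (Finset.mem_image_of_mem _ hxy))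
  have h_pair : ∀ x y : Γ,
      c (FreeSemigroup.of x * FreeSemigroup.of y) (ν (val x * val y)) := by
    intro x y
    exact ConGen.Rel.of _ _ (Finset.mem_union_right _
      (Finset.mem_image_of_mem _ (Finset.mem_univ (x, y))))
  have hνT : ∀ (s : S) (h : s ∈ T), ν s = FreeSemigroup.map Sum.inl (wt ⟨s, h⟩) := by
    intro s h; simp only [ν, dif_pos h]
  have hνB' : ∀ (s : S) (hs : s ∈ B), ν s = FreeSemigroup.of (Sum.inr ⟨s, hs⟩) := by
    intro s hs
    have h' : s ∉ T := hs
    simp only [ν, dif_neg h']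
  have hνB : ∀ (b : ↥B), ν (b : S) = FreeSemigroup.of (Sum.inr b) := by
    intro b
    rw [hνB' (b : S) b.2]
  have h_left : ∀ (w : FreeSemigroup (Fin n)) (b : ↥B),
      c (FreeSemigroup.of (Sum.inr b) * FreeSemigroup.map Sum.inl w)
        (ν ((b : S) * ((π w : T) : S))) := by
    intro w
    induction w using FreeSemigroup.recOnMul with
    | ih1 i =>
      intro b
      have := h_pair (Sum.inr b) (Sum.inl i)
      simpa [val] using this
    | ih2 i y _ ihy =>
      intro b
      simp only [map_mul, FreeSemigroup.map_of]
      set s : S := (b : S) * ((π (FreeSemigroup.of i) : T) : S) with hs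
      have harg : (b : S) * ((π (FreeSemigroup.of i) * π y : T) : S) = s * ((π y : T) : S) := by
        push_cast
        rw [hs, mul_assoc]
      rw [harg, ← mul_assoc]
      have h1 : c ((FreeSemigroup.of (Sum.inr b) * FreeSemigroup.of (Sum.inl i)) *
          FreeSemigroup.map Sum.inl y) (ν s * FreeSemigroup.map Sum.inl y) := by
        have := h_pair (Sum.inr b) (Sum.inl i)
        simp only [val, Sum.elim_inr, Sum.elim_inl] at this
        exact c.mul this (c.refl _)
      refine c.trans h1 ?_
      by_cases hsT : s ∈ T
      · have hmem : s * ((π y : T) : S) ∈ T := T.mul_mem hsT (π y).2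
        rw [hνT s hsT, ← map_mul]
        have hπ : π (wt ⟨s, hsT⟩ * y) = π (wt ⟨s * ((π y : T) : S), hmem⟩) := by
          rw [map_mul, hwt, hwt]
          ext
          push_cast
          rfl
        refine c.trans (h_inl hπ) ?_
        rw [hνT _ hmem]
        exact c.refl _
      · have hsB : s ∈ B := by simpa [hB] using hsT
        rw [hνB' s hsB]
        exact ihy ⟨s, hsB⟩
  have h_right : ∀ (w : FreeSemigroup (Fin n)) (b : ↥B),
      c (FreeSemigroup.map Sum.inl w * FreeSemigroup.of (Sum.inr b))
        (ν (((π w : T) : S) * (b : S))) := by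
    intro w
    induction w using FreeSemigroup.recOnMul with
    | ih1 i =>
      intro b
      have := h_pair (Sum.inl i) (Sum.inr b)
      simpa [val] using this
    | ih2 i y _ ihy =>
      intro b
      simp only [map_mul, FreeSemigroup.map_of]
      set t : S := ((π y : T) : S) * (b : S) with ht
      have harg : ((π (FreeSemigroup.of i) * π y : T) : S) * (b : S) =
          ((π (FreeSemigroup.of i) : T) : S) * t := by
        push_cast
        rw [ht, mul_assoc]
      rw [harg, mul_assoc]
      have h1 : c (FreeSemigroup.of (Sum.inl i) *
          (FreeSemigroup.map Sum.inl y * FreeSemigroup.of (Sum.inr b)))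
          (FreeSemigroup.of (Sum.inl i) * ν t) := c.mul (c.refl _) (ihy b)
      refine c.trans h1 ?_
      by_cases htT : t ∈ T
      · have hmem : ((π (FreeSemigroup.of i) : T) : S) * t ∈ T :=
          T.mul_mem (π (FreeSemigroup.of i)).2 htT
        rw [hνT t htT]
        have heq : FreeSemigroup.of (Sum.inl i : Γ) * FreeSemigroup.map Sum.inl (wt ⟨t, htT⟩) =
            FreeSemigroup.map Sum.inl (FreeSemigroup.of i * wt ⟨t, htT⟩) := by
          simp only [map_mul, FreeSemigroup.map_of]
        rw [heq]
        have hπ : π (FreeSemigroup.of i * wt ⟨t, htT⟩) =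
            π (wt ⟨((π (FreeSemigroup.of i) : T) : S) * t, hmem⟩) := by
          rw [map_mul, hwt, hwt]
          ext
          push_cast
          rfl
        refine c.trans (h_inl hπ) ?_
        rw [hνT _ hmem]
        exact c.refl _
      · have htB : t ∈ B := by simpa [hB] using htT
        rw [hνB' t htB]
        have h2 := h_pair (Sum.inl i) (Sum.inr ⟨t, htB⟩)
        simpa [val] using h2
  have h_M : ∀ s t : S, c (ν s * ν t) (ν (s * t)) := by
    intro s t
    by_cases hs : s ∈ T
    · by_cases ht : t ∈ T
      · rw [hνT s hs, hνT t ht, ← map_mul]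
        have hπ : π (wt ⟨s, hs⟩ * wt ⟨t, ht⟩) = π (wt ⟨s * t, T.mul_mem hs ht⟩) := by
          rw [map_mul, hwt, hwt, hwt]
          ext
          push_cast
          rfl
        refine c.trans (h_inl hπ) ?_
        rw [hνT _ (T.mul_mem hs ht)]
        exact c.refl _
      · have htB : t ∈ B := by simpa [hB] using ht
        rw [hνT s hs, hνB' t htB]
        have := h_right (wt ⟨s, hs⟩) ⟨t, htB⟩
        rw [hwt] at this
        exact this
    · have hsB : s ∈ B := by simpa [hB] using hs
      by_cases ht : t ∈ T
      · rw [hνB' s hsB, hνT t ht]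
        have := h_left (wt ⟨t, ht⟩) ⟨s, hsB⟩
        rw [hwt] at this
        exact this
      · have htB : t ∈ B := by simpa [hB] using ht
        rw [hνB' s hsB, hνB' t htB]
        have := h_pair (Sum.inr ⟨s, hsB⟩) (Sum.inr ⟨t, htB⟩)
        simpa [val] using this
  have h_norm : ∀ w : FreeSemigroup Γ, c w (ν (σ w)) := by
    intro w
    induction w using FreeSemigroup.recOnMul with
    | ih1 x =>
      cases x with
      | inl i =>
        have hσ : σ (FreeSemigroup.of (Sum.inl i)) = ((π (FreeSemigroup.of i) : T) : S) := by
          simp [σ, val]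
        rw [hσ, hνT _ (π (FreeSemigroup.of i)).2, ← FreeSemigroup.map_of (f := (Sum.inl : Fin n → Γ))]
        refine h_inl ?_
        rw [hwt]
      | inr b =>
        have hσ : σ (FreeSemigroup.of (Sum.inr b)) = (b : S) := by
          simp [σ, val]
        rw [hσ, hνB b]
        exact c.refl _
    | ih2 x y ihx ihy =>
      have h1 : c (FreeSemigroup.of x * y) (ν (σ (FreeSemigroup.of x)) * ν (σ y)) :=
        c.mul ihx ihy
      refine c.trans h1 ?_
      simp only [map_mul]
      exact h_M _ _
  -- finish
  refine semigroupFP_of_fintype σ (fun s => ⟨ν s, hν s⟩) RR ?_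
  intro u v
  constructor
  · intro h
    have : (Con.ker σ) u v := by
      refine Con.conGen_le.2 ?_ h
      rintro x y hxy
      rcases Finset.mem_union.mp hxy with h1 | h2
      · simp only [Finset.mem_image] at h1
        obtain ⟨p, hp, heq⟩ := h1
        have hx : x = FreeSemigroup.map Sum.inl p.1 := (congrArg Prod.fst heq).symm
        have hy : y = FreeSemigroup.map Sum.inl p.2 := (congrArg Prod.snd heq).symm
        have hπ : π p.1 = π p.2 := (hR p.1 p.2).mp (ConGen.Rel.of _ _ hp)
        show σ x = σ y
        rw [hx, hy, Emap, Emap, hπ]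
      · simp only [Finset.mem_image] at h2
        obtain ⟨xy, _, heq⟩ := h2
        have hx : x = FreeSemigroup.of xy.1 * FreeSemigroup.of xy.2 := (congrArg Prod.fst heq).symm
        have hy : y = ν (val xy.1 * val xy.2) := (congrArg Prod.snd heq).symm
        show σ x = σ y
        rw [hx, hy, map_mul, hν]
        simp [σ, val]
    exact this
  · intro h
    refine c.trans (h_norm u) (c.trans ?_ (c.symm (h_norm v)))
    rw [h]
    exact c.refl _

end AuxFP


/-- finite presentability passes from a subsemigroup of finite Rees index to
the whole semigroup. -/
theorem finitely_presented_of_finite_rees_index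
    {S : Type*} [Semigroup S] (T : Subsemigroup S) (hRees : ((T : Set S)ᶜ).Finite)
    (hT : SemigroupFP T) : SemigroupFP S := by
  obtain ⟨n, π, hs, R, hR⟩ := hT
  exact semigroupFP_main T hRees π hs R hR
end

section
/- Let S be a semigroup with finitely many left ideals and finitely many right ideals. Then S is residually finite if and only if every Schützenberger group of S is residually finite. -/
open GreenIndexPaper

namespace RFAux
open GreenIndexPaper

/-- endomorphisms with reversed composition -/
def REnd (α : Type*) : Type _ := α → α

instance (α : Type*) : Monoid (REnd α) where
  mul f g := fun x => g (f x)
  one := id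
  mul_assoc _ _ _ := rfl
  one_mul _ := rfl
  mul_one _ := rfl

theorem REnd.mul_apply {α : Type*} (f g : REnd α) (x : α) : (f * g) x = g (f x) := rfl

instance (α : Type*) [Finite α] : Finite (REnd α) := inferInstanceAs (Finite (α → α))

def PairT (α : Type*) : Type _ := α × REnd α

instance (α : Type*) : Semigroup (PairT α) where
  mul x y := (y.2 x.1, fun q => y.2 (x.2 q))
  mul_assoc _ _ _ := rfl

theorem PairT.mul_def {α : Type*} (x y : PairT α) :
    x * y = (y.2 x.1, fun q => y.2 (x.2 q)) := rfl

instance (α : Type*) [Finite α] : Finite (PairT α) := inferInstanceAs (Finite (α × REnd α))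

variable {S : Type*} [Semigroup S]

theorem coe_mul_right (x : S) (p : WithOne S) : ∃ z : S, (x : WithOne S) * p = z :=
  WithOne.recOneCoe ⟨x, mul_one _⟩ (fun t => ⟨x * t, (WithOne.coe_mul x t).symm⟩) p

theorem coe_mul_left (x : S) (p : WithOne S) : ∃ z : S, p * (x : WithOne S) = z :=
  WithOne.recOneCoe ⟨x, one_mul _⟩ (fun t => ⟨t * x, (WithOne.coe_mul t x).symm⟩) p

/-- `v ∈ u·S¹` -/
def Rr (u v : S) : Prop := ∃ p : WithOne S, (u : WithOne S) * p = v

/-- `v ∈ S¹·u` -/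
def Ll (u v : S) : Prop := ∃ p : WithOne S, p * (u : WithOne S) = v

theorem Rr.rfl {u : S} : Rr u u := ⟨1, mul_one _⟩
theorem Ll.rfl {u : S} : Ll u u := ⟨1, one_mul _⟩

theorem Rr.trans {u v w : S} (h1 : Rr u v) (h2 : Rr v w) : Rr u w := by
  obtain ⟨p, hp⟩ := h1; obtain ⟨q, hq⟩ := h2
  exact ⟨p * q, by rw [← mul_assoc, hp, hq]⟩

theorem Ll.trans {u v w : S} (h1 : Ll u v) (h2 : Ll v w) : Ll u w := by
  obtain ⟨p, hp⟩ := h1; obtain ⟨q, hq⟩ := h2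
  exact ⟨q * p, by rw [mul_assoc, hp, hq]⟩

theorem mem_rset_iff {u x : S} : x ∈ rset (⊤ : Subsemigroup S) u ↔ Rr u x := by
  constructor
  · rintro (rfl | ⟨t, -, rfl⟩)
    · exact Rr.rfl
    · exact ⟨t, (WithOne.coe_mul u t).symm⟩
  · rintro ⟨p, hp⟩
    induction p using WithOne.recOneCoe with
    | one =>
      rw [mul_one, WithOne.coe_inj] at hp
      exact hp ▸ Set.mem_insert _ _
    | coe t =>
      rw [← WithOne.coe_mul, WithOne.coe_inj] at hp
      exact Or.inr ⟨t, trivial, hp.symm⟩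

theorem mem_lset_iff {u x : S} : x ∈ lset (⊤ : Subsemigroup S) u ↔ Ll u x := by
  constructor
  · rintro (rfl | ⟨t, -, rfl⟩)
    · exact Ll.rfl
    · exact ⟨t, (WithOne.coe_mul t u).symm⟩
  · rintro ⟨p, hp⟩
    induction p using WithOne.recOneCoe with
    | one =>
      rw [one_mul, WithOne.coe_inj] at hp
      exact hp ▸ Set.mem_insert _ _
    | coe t =>
      rw [← WithOne.coe_mul, WithOne.coe_inj] at hp
      exact Or.inr ⟨t, trivial, hp.symm⟩

theorem rrelT_iff {u v : S} : RrelT (⊤ : Subsemigroup S) u v ↔ Rr u v ∧ Rr v u := by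
  constructor
  · intro h
    refine ⟨mem_rset_iff.mp ?_, mem_rset_iff.mp ?_⟩
    · rw [h]; exact Set.mem_insert _ _
    · rw [← h]; exact Set.mem_insert _ _
  · rintro ⟨h1, h2⟩
    apply Set.Subset.antisymm <;>
      · intro z hz
        exact mem_rset_iff.mpr ((by assumption : Rr _ _).trans (mem_rset_iff.mp hz))

theorem lrelT_iff {u v : S} : LrelT (⊤ : Subsemigroup S) u v ↔ Ll u v ∧ Ll v u := by
  constructor
  · intro h
    refine ⟨mem_lset_iff.mp ?_, mem_lset_iff.mp ?_⟩
    · rw [h]; exact Set.mem_insert _ _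
    · rw [← h]; exact Set.mem_insert _ _
  · rintro ⟨h1, h2⟩
    apply Set.Subset.antisymm <;>
      · intro z hz
        exact mem_lset_iff.mpr ((by assumption : Ll _ _).trans (mem_lset_iff.mp hz))

/-- The `ℋ`-class of `a`. -/
def Hcl (a : S) : Set S := {x | HrelT (⊤ : Subsemigroup S) a x}

theorem mem_Hcl_iff {a x : S} : x ∈ Hcl a ↔ (Rr a x ∧ Rr x a) ∧ (Ll a x ∧ Ll x a) := by
  unfold Hcl HrelT
  rw [Set.mem_setOf_eq, rrelT_iff, lrelT_iff]

theorem a_mem_Hcl (a : S) : a ∈ Hcl a :=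
  mem_Hcl_iff.mpr ⟨⟨Rr.rfl, Rr.rfl⟩, ⟨Ll.rfl, Ll.rfl⟩⟩

end RFAux

namespace RFAux
variable {S : Type*} [Semigroup S]
open GreenIndexPaper

theorem Ll_of_mem {a g h₀ : S} (hg : g ∈ Hcl a) (h₀H : h₀ ∈ Hcl a) : Ll h₀ g :=
  ((mem_Hcl_iff.mp h₀H).2.2).trans (mem_Hcl_iff.mp hg).2.1

theorem Rr_of_mem {a g h₀ : S} (hg : g ∈ Hcl a) (h₀H : h₀ ∈ Hcl a) : Rr h₀ g :=
  ((mem_Hcl_iff.mp h₀H).1.2).trans (mem_Hcl_iff.mp hg).1.1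

/-- Green's lemma: a right translation between elements of an `ℋ`-class maps the whole
class into itself, with a two-sided inverse translation. -/
theorem key1 {a g h₀ h₁ : S} (hg : g ∈ Hcl a) (h₀H : h₀ ∈ Hcl a) (h₁H : h₁ ∈ Hcl a)
    {q q' : WithOne S} (e1 : (h₀ : WithOne S) * q = h₁) (e2 : (h₁ : WithOne S) * q' = h₀) :
    ∃ g₂ ∈ Hcl a, (g : WithOne S) * q = g₂ ∧ (g₂ : WithOne S) * q' = g := by
  obtain ⟨w, hw⟩ := Ll_of_mem hg h₀H
  obtain ⟨β, hβ⟩ := Ll_of_mem h₀H hg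
  obtain ⟨g₂, hg₂⟩ := coe_mul_left h₁ w
  have hgq2 : (g : WithOne S) * q = g₂ := by rw [← hw, mul_assoc, e1, hg₂]
  have hident : (g₂ : WithOne S) * q' = g := by rw [← hg₂, mul_assoc, e2, hw]
  refine ⟨g₂, ?_, hgq2, hident⟩
  have hLh₁g₂ : Ll h₁ g₂ := ⟨w, hg₂⟩
  have hLg₂h₁ : Ll g₂ h₁ := by
    refine ⟨β, ?_⟩
    rw [← hgq2, ← mul_assoc, hβ, e1]
  have hRgg₂ : Rr g g₂ := ⟨q, hgq2⟩
  have hRg₂g : Rr g₂ g := ⟨q', hident⟩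
  refine mem_Hcl_iff.mpr ⟨⟨?_, ?_⟩, ?_, ?_⟩
  · exact (Rr_of_mem hg (a_mem_Hcl a)).trans hRgg₂
  · exact hRg₂g.trans (mem_Hcl_iff.mp hg).1.2
  · exact ((mem_Hcl_iff.mp h₁H).2.1).trans hLh₁g₂
  · exact hLg₂h₁.trans (mem_Hcl_iff.mp h₁H).2.2

theorem mem_T1_top (q : WithOne S) : q ∈ T1 (⊤ : Subsemigroup S) :=
  WithOne.recOneCoe (Set.mem_insert _ _) (fun t => Or.inr ⟨t, trivial, rfl⟩) q

/-- Any element of `S¹` translating one element of an `ℋ`-class to another element of the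
same class stabilizes the whole class. -/
theorem stab_mem {a h₀ h₁ : S} (h₀H : h₀ ∈ Hcl a) (h₁H : h₁ ∈ Hcl a) {q : WithOne S}
    (e1 : (h₀ : WithOne S) * q = h₁) : q ∈ stabSet (⊤ : Subsemigroup S) (Hcl a) := by
  obtain ⟨q', e2⟩ := Rr_of_mem h₀H h₁H
  refine ⟨mem_T1_top q, ?_⟩
  apply Set.Subset.antisymm
  · rintro z ⟨g, hgH, rfl⟩
    obtain ⟨g₂, g₂H, hq, -⟩ := key1 hgH h₀H h₁H e1 e2
    exact ⟨g₂, g₂H, hq.symm⟩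
  · rintro z ⟨g, hgH, rfl⟩
    obtain ⟨g₃, g₃H, -, hq⟩ := key1 hgH h₁H h₀H e2 e1
    exact ⟨g₃, g₃H, hq.symm⟩

/-- The `ℋ`-class as a subset of `S¹`. -/
def HQ (a : S) : Set (WithOne S) := ((↑) : S → WithOne S) '' Hcl a

abbrev StabM (a : S) := stabSubmonoid (⊤ : Subsemigroup S) (Hcl a)

theorem stab_apply {a : S} (σ : StabM a) {h : S} (hh : h ∈ Hcl a) :
    ((h : WithOne S) * (σ : WithOne S)) ∈ HQ a := by
  have h2 := σ.2.2
  have : ((h : WithOne S) * (σ : WithOne S)) ∈ setMulR (Hcl a) (σ : WithOne S) :=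
    ⟨h, hh, rfl⟩
  rw [h2] at this
  exact this

theorem exists_stab {a : S} {w : WithOne S} (hw : w ∈ HQ a) :
    ∃ σ : StabM a, (a : WithOne S) * (σ : WithOne S) = w := by
  obtain ⟨h, hH, rfl⟩ := hw
  obtain ⟨p, hp⟩ := Rr_of_mem hH (a_mem_Hcl a)
  exact ⟨⟨p, stab_mem (a_mem_Hcl a) hH hp⟩, hp⟩

theorem gamma_of {a : S} (σ τ : StabM a)
    (h : (a : WithOne S) * (σ : WithOne S) = (a : WithOne S) * (τ : WithOne S)) :
    gammaCon (⊤ : Subsemigroup S) (Hcl a) σ τ := by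
  intro g hg
  obtain ⟨w, hw⟩ := Ll_of_mem hg (a_mem_Hcl a)
  show (g : WithOne S) * (σ : WithOne S) = (g : WithOne S) * (τ : WithOne S)
  rw [← hw, mul_assoc, mul_assoc, h]

noncomputable def coordW (a : S) (w : WithOne S) (hw : w ∈ HQ a) :
    SchGroup (⊤ : Subsemigroup S) (Hcl a) :=
  ((exists_stab hw).choose : SchGroup (⊤ : Subsemigroup S) (Hcl a))

theorem coordW_out {a : S} {w : WithOne S} (hw : w ∈ HQ a) :
    ∃ σ : StabM a, (a : WithOne S) * (σ : WithOne S) = w ∧ coordW a w hw = ↑σ :=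
  ⟨(exists_stab hw).choose, (exists_stab hw).choose_spec, rfl⟩

theorem coordW_eq {a : S} {w : WithOne S} (hw : w ∈ HQ a) (σ : StabM a)
    (hσ : (a : WithOne S) * (σ : WithOne S) = w) : coordW a w hw = ↑σ := by
  obtain ⟨τ, hτ, eτ⟩ := coordW_out hw
  rw [eτ]
  exact (Con.eq _).mpr (gamma_of τ σ (by rw [hτ, hσ]))

theorem coordW_congr {a : S} {w w' : WithOne S} (e : w = w') (hw : w ∈ HQ a)
    (hw' : w' ∈ HQ a) : coordW a w hw = coordW a w' hw' := by subst e; rfl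

end RFAux

namespace RFAux
variable {S : Type*} [Semigroup S]
open GreenIndexPaper

theorem coe_one_stab {a : S} :
    ((↑(1 : StabM a) : SchGroup (⊤ : Subsemigroup S) (Hcl a))) = 1 := Con.coe_one

/-- The Schützenberger monoid is a group: every element has a two-sided inverse. -/
theorem ginv {a : S} (x : SchGroup (⊤ : Subsemigroup S) (Hcl a)) :
    ∃ y, x * y = 1 ∧ y * x = 1 := by
  induction x using Con.induction_on with
  | H σ => ?_
  have haσ : ((a : WithOne S) * (σ : WithOne S)) ∈ HQ a := stab_apply σ (a_mem_Hcl a)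
  obtain ⟨h₁, h₁H, e⟩ := haσ
  obtain ⟨p', e2⟩ := Rr_of_mem (a_mem_Hcl a) h₁H
  have hp' : p' ∈ stabSet (⊤ : Subsemigroup S) (Hcl a) := stab_mem h₁H (a_mem_Hcl a) e2
  set τ : StabM a := ⟨p', hp'⟩ with hτdef
  refine ⟨↑τ, ?_, ?_⟩
  · rw [← Con.coe_mul, ← coe_one_stab]
    refine (Con.eq _).mpr ?_
    intro g hg
    obtain ⟨w, hw⟩ := Ll_of_mem hg (a_mem_Hcl a)
    show (g : WithOne S) * ((σ : WithOne S) * p') = (g : WithOne S) * _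
    have : ((1 : StabM a) : WithOne S) = 1 := rfl
    rw [this, mul_one, ← hw, mul_assoc, ← mul_assoc (a : WithOne S), ← e, e2]
  · rw [← Con.coe_mul, ← coe_one_stab]
    refine (Con.eq _).mpr ?_
    intro g hg
    obtain ⟨w, hw⟩ := Ll_of_mem hg h₁H
    show (g : WithOne S) * (p' * (σ : WithOne S)) = (g : WithOne S) * _
    have h1 : ((1 : StabM a) : WithOne S) = 1 := rfl
    rw [h1, mul_one, ← hw, mul_assoc, ← mul_assoc (h₁ : WithOne S), e2, ← e]

theorem left_mem {a : S} {u w₀ : WithOne S} (hw₀ : w₀ ∈ HQ a) (hu : u * w₀ ∈ HQ a) :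
    ∀ w ∈ HQ a, u * w ∈ HQ a := by
  rintro w ⟨h, hH, rfl⟩
  obtain ⟨k₀, k₀H, rfl⟩ := hw₀
  obtain ⟨q, hq⟩ := Rr_of_mem hH k₀H
  have hqs : q ∈ stabSet (⊤ : Subsemigroup S) (Hcl a) := stab_mem k₀H hH hq
  obtain ⟨k₁, k₁H, e⟩ := hu
  have : u * (h : WithOne S) = (k₁ : WithOne S) * q := by
    rw [← hq, ← mul_assoc, ← e]
  rw [this]
  exact stab_apply ⟨q, hqs⟩ k₁H

theorem left_coord {a : S} {u : WithOne S} (hua : u * (a : WithOne S) ∈ HQ a) :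
    ∀ w (hw : w ∈ HQ a) (huw : u * w ∈ HQ a),
      coordW a (u * w) huw = coordW a (u * (a : WithOne S)) hua * coordW a w hw := by
  intro w hw huw
  obtain ⟨τ, hτ, eτ⟩ := coordW_out hua
  obtain ⟨σ, hσ, eσ⟩ := coordW_out hw
  rw [eτ, eσ, ← Con.coe_mul]
  refine coordW_eq huw (τ * σ) ?_
  have : ((τ * σ : StabM a) : WithOne S) = (τ : WithOne S) * (σ : WithOne S) := rfl
  rw [this, ← mul_assoc, hτ, mul_assoc, hσ]

end RFAux

namespace RFAux
variable {S : Type*} [Semigroup S]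
open GreenIndexPaper

/-- Right ideals of `S¹`. -/
def RI (S : Type*) [Semigroup S] : Set (Set (WithOne S)) :=
  {R | R.Nonempty ∧ ∀ w ∈ R, ∀ q : WithOne S, w * q ∈ R}

def rsetQ (p : WithOne S) : Set (WithOne S) := {z | ∃ q : WithOne S, p * q = z}

def lsetQ (w : WithOne S) : Set (WithOne S) := {z | ∃ q : WithOne S, q * w = z}

def lmulW (u : WithOne S) (R : Set (WithOne S)) : Set (WithOne S) := (u * ·) '' R

theorem rsetQ_mem_RI (p : WithOne S) : rsetQ p ∈ RI S := by
  refine ⟨⟨p, 1, mul_one p⟩, ?_⟩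
  rintro w ⟨q, rfl⟩ q'
  exact ⟨q * q', (mul_assoc _ _ _).symm⟩

theorem lmulW_mem_RI (u : WithOne S) {R : Set (WithOne S)} (hR : R ∈ RI S) :
    lmulW u R ∈ RI S := by
  obtain ⟨⟨r, hr⟩, hcl⟩ := hR
  refine ⟨⟨u * r, r, hr, rfl⟩, ?_⟩
  rintro w ⟨r', hr', rfl⟩ q
  exact ⟨r' * q, hcl r' hr' q, (mul_assoc _ _ _).symm⟩

theorem rsetQ_lmulW (u : WithOne S) (p : WithOne S) :
    rsetQ (u * p) = lmulW u (rsetQ p) := by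
  ext z
  constructor
  · rintro ⟨q, rfl⟩
    exact ⟨p * q, ⟨q, rfl⟩, (mul_assoc _ _ _).symm⟩
  · rintro ⟨r, ⟨q, rfl⟩, rfl⟩
    exact ⟨q, mul_assoc _ _ _⟩

theorem lsetQ_mul {w w' : WithOne S} (e : lsetQ w = lsetQ w') (p : WithOne S) :
    lsetQ (w * p) = lsetQ (w' * p) := by
  have key : ∀ {v v' : WithOne S}, lsetQ v = lsetQ v' → lsetQ (v * p) ⊆ lsetQ (v' * p) := by
    intro v v' h
    rintro z ⟨q, rfl⟩
    have : q * v ∈ lsetQ v := ⟨q, rfl⟩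
    rw [h] at this
    obtain ⟨q', hq'⟩ := this
    exact ⟨q', by rw [← mul_assoc, hq', mul_assoc]⟩
  exact Set.Subset.antisymm (key e) (key e.symm)

theorem lsetQ_image (w p : WithOne S) : lsetQ (w * p) = (· * p) '' lsetQ w := by
  ext z
  constructor
  · rintro ⟨q, rfl⟩
    exact ⟨q * w, ⟨q, rfl⟩, mul_assoc _ _ _⟩
  · rintro ⟨r, ⟨q, rfl⟩, rfl⟩
    exact ⟨q, (mul_assoc _ _ _).symm⟩

theorem lsetQ_coe (x : S) : lsetQ (x : WithOne S) = ((↑) : S → WithOne S) '' lset (⊤ : Subsemigroup S) x := by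
  ext z
  constructor
  · rintro ⟨q, rfl⟩
    obtain ⟨z', hz'⟩ := coe_mul_left x q
    exact ⟨z', mem_lset_iff.mpr ⟨q, hz'⟩, hz'.symm⟩
  · rintro ⟨z', hz', rfl⟩
    exact mem_lset_iff.mp hz'

theorem rsetQ_eq_iff {u v : S} : rsetQ (u : WithOne S) = rsetQ (v : WithOne S) ↔ Rr u v ∧ Rr v u := by
  constructor
  · intro h
    constructor
    · have : (v : WithOne S) ∈ rsetQ (v : WithOne S) := ⟨1, mul_one _⟩
      rw [← h] at this; exact this
    · have : (u : WithOne S) ∈ rsetQ (u : WithOne S) := ⟨1, mul_one _⟩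
      rw [h] at this; exact this
  · rintro ⟨⟨p, hp⟩, ⟨q, hq⟩⟩
    ext z
    constructor
    · rintro ⟨r, rfl⟩
      exact ⟨q * r, by rw [← mul_assoc, hq]⟩
    · rintro ⟨r, rfl⟩
      exact ⟨p * r, by rw [← mul_assoc, hp]⟩

theorem lsetQ_eq_iff {u v : S} : lsetQ (u : WithOne S) = lsetQ (v : WithOne S) ↔ Ll u v ∧ Ll v u := by
  constructor
  · intro h
    constructor
    · have : (v : WithOne S) ∈ lsetQ (v : WithOne S) := ⟨1, one_mul _⟩
      rw [← h] at this; exact this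
    · have : (u : WithOne S) ∈ lsetQ (u : WithOne S) := ⟨1, one_mul _⟩
      rw [h] at this; exact this
  · rintro ⟨⟨p, hp⟩, ⟨q, hq⟩⟩
    ext z
    constructor
    · rintro ⟨r, rfl⟩
      exact ⟨r * q, by rw [mul_assoc, hq]⟩
    · rintro ⟨r, rfl⟩
      exact ⟨r * p, by rw [mul_assoc, hp]⟩

theorem mem_HQ_iff {a : S} {w : WithOne S} :
    w ∈ HQ a ↔ (∃ s : S, w = s) ∧ rsetQ w = rsetQ (a : WithOne S) ∧ lsetQ w = lsetQ (a : WithOne S) := by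
  constructor
  · rintro ⟨h, hH, rfl⟩
    obtain ⟨⟨r1, r2⟩, l1, l2⟩ := mem_Hcl_iff.mp hH
    exact ⟨⟨h, rfl⟩, rsetQ_eq_iff.mpr ⟨r2, r1⟩, lsetQ_eq_iff.mpr ⟨l2, l1⟩⟩
  · rintro ⟨⟨s, rfl⟩, hr, hl⟩
    refine ⟨s, mem_Hcl_iff.mpr ⟨?_, ?_⟩, rfl⟩
    · obtain ⟨r1, r2⟩ := rsetQ_eq_iff.mp hr
      exact ⟨r2, r1⟩
    · obtain ⟨l1, l2⟩ := lsetQ_eq_iff.mp hl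
      exact ⟨l2, l1⟩

theorem RI_finite (hR : {R : Set S | IsRightIdeal R}.Finite) : (RI S).Finite := by
  classical
  have himg : ((fun R : Set (WithOne S) =>
      if (1 : WithOne S) ∈ R then (none : Option (Set S)) else some (((↑) : S → WithOne S) ⁻¹' R)) ''
        RI S).Finite := by
    apply Set.Finite.subset (Set.Finite.insert none (hR.image some))
    rintro _ ⟨R, hRmem, rfl⟩
    by_cases h1 : (1 : WithOne S) ∈ R
    · simp [h1]
    · simp only [h1, if_false]
      refine Set.mem_insert_iff.mpr (Or.inr ⟨_, ?_, rfl⟩)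
      constructor
      · obtain ⟨⟨w, hw⟩, -⟩ := hRmem
        obtain ⟨s, rfl⟩ : ∃ s : S, w = s := by
          induction w using WithOne.recOneCoe with
          | one => exact absurd hw h1
          | coe t => exact ⟨t, rfl⟩
        exact ⟨s, hw⟩
      · intro s x hx
        have := hRmem.2 (x : WithOne S) hx (s : WithOne S)
        show ((x * s : S) : WithOne S) ∈ R
        rwa [WithOne.coe_mul]
  apply Set.Finite.of_finite_image himg
  intro R₁ hR₁ R₂ hR₂ he
  by_cases h1 : (1 : WithOne S) ∈ R₁
  · have h2 : (1 : WithOne S) ∈ R₂ := by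
      by_contra h2
      simp [h1, h2] at he
    have huniv : ∀ (R : Set (WithOne S)), R ∈ RI S → (1 : WithOne S) ∈ R → R = Set.univ := by
      intro R hRm hR1
      apply Set.eq_univ_of_forall
      intro w
      have := hRm.2 _ hR1 w
      rwa [one_mul] at this
    rw [huniv R₁ hR₁ h1, huniv R₂ hR₂ h2]
  · have h2 : (1 : WithOne S) ∉ R₂ := by
      by_contra h2
      simp [h1, h2] at he
    simp only [h1, h2, if_false, Option.some_inj] at he
    have hcoe : ∀ (R : Set (WithOne S)), (1 : WithOne S) ∉ R →
        R = ((↑) : S → WithOne S) '' (((↑) : S → WithOne S) ⁻¹' R) := by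
      intro R hR1
      apply Set.Subset.antisymm
      · intro w hw
        obtain ⟨s, rfl⟩ : ∃ s : S, w = s := by
          induction w using WithOne.recOneCoe with
          | one => exact absurd hw hR1
          | coe t => exact ⟨t, rfl⟩
        exact ⟨s, hw, rfl⟩
      · rintro _ ⟨s, hs, rfl⟩
        exact hs
    rw [hcoe R₁ h1, hcoe R₂ h2, he]

end RFAux

namespace RFAux
variable {S : Type*} [Semigroup S]
open GreenIndexPaper

def RIsub (S : Type*) [Semigroup S] := {R : Set (WithOne S) // R ∈ RI S}

def LIsub (S : Type*) [Semigroup S] := {L : Set S // IsLeftIdeal L}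

theorem lset_isLeftIdeal (x : S) : IsLeftIdeal (lset (⊤ : Subsemigroup S) x) := by
  constructor
  · exact ⟨x, Set.mem_insert _ _⟩
  · rintro s z (rfl | ⟨t, -, rfl⟩)
    · exact Or.inr ⟨s, trivial, rfl⟩
    · exact Or.inr ⟨s * t, trivial, (mul_assoc s t x).symm⟩

theorem univ_mem_RI : (Set.univ : Set (WithOne S)) ∈ RI S :=
  ⟨⟨1, trivial⟩, fun _ _ _ => trivial⟩

theorem lmulW_univ (x : S) : lmulW (x : WithOne S) Set.univ = rsetQ (x : WithOne S) := by
  ext z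
  constructor
  · rintro ⟨q, -, rfl⟩; exact ⟨q, rfl⟩
  · rintro ⟨q, rfl⟩; exact ⟨q, trivial, rfl⟩

theorem lmulW_comp (u v : WithOne S) (R : Set (WithOne S)) :
    lmulW (u * v) R = lmulW u (lmulW v R) := by
  ext z
  constructor
  · rintro ⟨r, hr, rfl⟩; exact ⟨v * r, ⟨r, hr, rfl⟩, (mul_assoc u v r).symm⟩
  · rintro ⟨-, ⟨r, hr, rfl⟩, rfl⟩; exact ⟨r, hr, mul_assoc u v r⟩

theorem lset_eq_of_lsetQ {x y : S}
    (h : lsetQ (x : WithOne S) = lsetQ (y : WithOne S)) :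
    lset (⊤ : Subsemigroup S) x = lset (⊤ : Subsemigroup S) y := by
  obtain ⟨l1, l2⟩ := lsetQ_eq_iff.mp h
  apply Set.Subset.antisymm
  · intro z hz
    exact mem_lset_iff.mpr (l2.trans (mem_lset_iff.mp hz))
  · intro z hz
    exact mem_lset_iff.mpr (l1.trans (mem_lset_iff.mp hz))

/-- The separating right-compatible relation. -/
def sep (a : S) {F' : Type*} [Semigroup F']
    (θ : SchGroup (⊤ : Subsemigroup S) (Hcl a) →ₙ* F') (x y : S) : Prop :=
  (∀ R ∈ RI S, lmulW (x : WithOne S) R = lmulW (y : WithOne S) R) ∧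
  lsetQ (x : WithOne S) = lsetQ (y : WithOne S) ∧
  ∀ p : WithOne S, ∀ hx : (x : WithOne S) * p ∈ HQ a, ∀ hy : (y : WithOne S) * p ∈ HQ a,
    θ (coordW a _ hx) = θ (coordW a _ hy)

theorem sep_HQ {a x y : S}
    (h1 : ∀ R ∈ RI S, lmulW (x : WithOne S) R = lmulW (y : WithOne S) R)
    (h2 : lsetQ (x : WithOne S) = lsetQ (y : WithOne S)) (p : WithOne S) :
    ((x : WithOne S) * p ∈ HQ a ↔ (y : WithOne S) * p ∈ HQ a) := by
  have hr : rsetQ ((x : WithOne S) * p) = rsetQ ((y : WithOne S) * p) := by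
    rw [rsetQ_lmulW, rsetQ_lmulW, h1 _ (rsetQ_mem_RI p)]
  have hl : lsetQ ((x : WithOne S) * p) = lsetQ ((y : WithOne S) * p) := lsetQ_mul h2 p
  rw [mem_HQ_iff, mem_HQ_iff, hr, hl]
  have ex : ∃ s : S, (x : WithOne S) * p = s := coe_mul_right x p
  have ey : ∃ s : S, (y : WithOne S) * p = s := coe_mul_right y p
  simp [ex, ey]

theorem sep_refl (a : S) {F' : Type*} [Semigroup F']
    (θ : SchGroup (⊤ : Subsemigroup S) (Hcl a) →ₙ* F') (x : S) : sep a θ x x :=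
  ⟨fun _ _ => rfl, rfl, fun _ _ _ => rfl⟩

theorem sep_symm {a : S} {F' : Type*} [Semigroup F']
    {θ : SchGroup (⊤ : Subsemigroup S) (Hcl a) →ₙ* F'} {x y : S} (h : sep a θ x y) :
    sep a θ y x :=
  ⟨fun R hR => (h.1 R hR).symm, h.2.1.symm, fun p hy hx => (h.2.2 p hx hy).symm⟩

theorem sep_trans {a : S} {F' : Type*} [Semigroup F']
    {θ : SchGroup (⊤ : Subsemigroup S) (Hcl a) →ₙ* F'} {x y z : S}
    (hxy : sep a θ x y) (hyz : sep a θ y z) : sep a θ x z := by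
  refine ⟨fun R hR => (hxy.1 R hR).trans (hyz.1 R hR), hxy.2.1.trans hyz.2.1, ?_⟩
  intro p hx hz
  have hy : (y : WithOne S) * p ∈ HQ a := (sep_HQ hxy.1 hxy.2.1 p).mp hx
  exact (hxy.2.2 p hx hy).trans (hyz.2.2 p hy hz)

theorem sep_mul {a : S} {F' : Type*} [Semigroup F']
    {θ : SchGroup (⊤ : Subsemigroup S) (Hcl a) →ₙ* F'} {x y : S} (h : sep a θ x y) (s : S) :
    sep a θ (x * s) (y * s) := by
  refine ⟨?_, ?_, ?_⟩
  · intro R hR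
    rw [WithOne.coe_mul, WithOne.coe_mul, lmulW_comp, lmulW_comp,
      h.1 _ (lmulW_mem_RI _ hR)]
  · rw [WithOne.coe_mul, WithOne.coe_mul]
    exact lsetQ_mul h.2.1 _
  · intro p hx hy
    have ex : ((x * s : S) : WithOne S) * p = (x : WithOne S) * ((s : WithOne S) * p) := by
      rw [WithOne.coe_mul, mul_assoc]
    have ey : ((y * s : S) : WithOne S) * p = (y : WithOne S) * ((s : WithOne S) * p) := by
      rw [WithOne.coe_mul, mul_assoc]
    have hx' : (x : WithOne S) * ((s : WithOne S) * p) ∈ HQ a := ex ▸ hx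
    have hy' : (y : WithOne S) * ((s : WithOne S) * p) ∈ HQ a := ey ▸ hy
    rw [coordW_congr ex hx hx', coordW_congr ey hy hy']
    exact h.2.2 _ hx' hy'

def sepSetoid (a : S) {F' : Type*} [Semigroup F']
    (θ : SchGroup (⊤ : Subsemigroup S) (Hcl a) →ₙ* F') : Setoid S :=
  ⟨sep a θ, ⟨sep_refl a θ, sep_symm, sep_trans⟩⟩

/-- first invariant: action on right ideals of `S¹` -/
def C1 (x : S) : RIsub S → RIsub S :=
  fun R => ⟨lmulW (x : WithOne S) R.1, lmulW_mem_RI _ R.2⟩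

/-- second invariant: the principal left ideal -/
def C2 (x : S) : LIsub S := ⟨lset (⊤ : Subsemigroup S) x, lset_isLeftIdeal x⟩

/-- the set `{p | x·p ∈ H}` computed from the invariants `C1, C2` only -/
def Ksets (a : S) (f : RIsub S → RIsub S) (L : LIsub S) : Set (WithOne S) :=
  {p | (f ⟨rsetQ p, rsetQ_mem_RI p⟩).1 = rsetQ (a : WithOne S) ∧
    (· * p) '' (((↑) : S → WithOne S) '' L.1) = lsetQ (a : WithOne S)}

theorem Ksets_spec (a x : S) (p : WithOne S) :
    p ∈ Ksets a (C1 x) (C2 x) ↔ (x : WithOne S) * p ∈ HQ a := by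
  have e1 : lmulW (x : WithOne S) (rsetQ p) = rsetQ ((x : WithOne S) * p) :=
    (rsetQ_lmulW _ _).symm
  have e2 : (· * p) '' (((↑) : S → WithOne S) '' lset (⊤ : Subsemigroup S) x) =
      lsetQ ((x : WithOne S) * p) := by
    rw [← lsetQ_coe, ← lsetQ_image]
  constructor
  · rintro ⟨hr, hl⟩
    refine mem_HQ_iff.mpr ⟨coe_mul_right x p, ?_, ?_⟩
    · exact e1.symm.trans hr
    · exact e2.symm.trans hl
  · intro h
    obtain ⟨-, hr, hl⟩ := mem_HQ_iff.mp h
    exact ⟨e1.trans hr, e2.trans hl⟩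

open Classical in
noncomputable def pickP (a : S) (d : (RIsub S → RIsub S) × LIsub S) : WithOne S :=
  if h : (Ksets a d.1 d.2).Nonempty then h.some else 1

theorem pickP_mem {a : S} {d : (RIsub S → RIsub S) × LIsub S}
    (h : (Ksets a d.1 d.2).Nonempty) : pickP a d ∈ Ksets a d.1 d.2 := by
  unfold pickP
  rw [dif_pos h]
  exact h.some_mem

open Classical in
noncomputable def C3 (a : S) {F' : Type*} [Semigroup F']
    (θ : SchGroup (⊤ : Subsemigroup S) (Hcl a) →ₙ* F') (x : S) : Option F' :=
  if h : (x : WithOne S) * pickP a (C1 x, C2 x) ∈ HQ a then some (θ (coordW a _ h)) else none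

theorem C1_sep {a : S} {F' : Type*} [Semigroup F']
    {θ : SchGroup (⊤ : Subsemigroup S) (Hcl a) →ₙ* F'} {x y : S} (h : sep a θ x y) :
    C1 x = C1 y :=
  funext fun R => Subtype.ext (h.1 R.1 R.2)

theorem C2_sep {a : S} {F' : Type*} [Semigroup F']
    {θ : SchGroup (⊤ : Subsemigroup S) (Hcl a) →ₙ* F'} {x y : S} (h : sep a θ x y) :
    C2 x = C2 y :=
  Subtype.ext (lset_eq_of_lsetQ h.2.1)

theorem C3_sep {a : S} {F' : Type*} [Semigroup F']
    {θ : SchGroup (⊤ : Subsemigroup S) (Hcl a) →ₙ* F'} {x y : S} (h : sep a θ x y) :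
    C3 a θ x = C3 a θ y := by
  have ep : pickP a (C1 x, C2 x) = pickP a (C1 y, C2 y) := by
    rw [C1_sep h, C2_sep h]
  unfold C3
  rw [← ep]
  by_cases hc : (x : WithOne S) * pickP a (C1 x, C2 x) ∈ HQ a
  · have hy : (y : WithOne S) * pickP a (C1 x, C2 x) ∈ HQ a :=
      (sep_HQ h.1 h.2.1 _).mp hc
    rw [dif_pos hc, dif_pos hy]
    exact congrArg some (h.2.2 _ hc hy)
  · have hy : ¬ ((y : WithOne S) * pickP a (C1 x, C2 x) ∈ HQ a) :=
      fun hy => hc ((sep_HQ h.1 h.2.1 _).mpr hy)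
    rw [dif_neg hc, dif_neg hy]

theorem sep_of_C {a : S} {F' : Type*} [Semigroup F']
    {θ : SchGroup (⊤ : Subsemigroup S) (Hcl a) →ₙ* F'} {x y : S}
    (e1 : C1 x = C1 y) (e2 : C2 x = C2 y) (e3 : C3 a θ x = C3 a θ y) : sep a θ x y := by
  have part1 : ∀ R ∈ RI S, lmulW (x : WithOne S) R = lmulW (y : WithOne S) R := by
    intro R hR
    exact congrArg Subtype.val (congrFun e1 ⟨R, hR⟩)
  have part2 : lsetQ (x : WithOne S) = lsetQ (y : WithOne S) := by
    have : lset (⊤ : Subsemigroup S) x = lset (⊤ : Subsemigroup S) y :=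
      congrArg Subtype.val e2
    rw [lsetQ_coe, lsetQ_coe, this]
  refine ⟨part1, part2, ?_⟩
  intro p hx hy
  have hKne : (Ksets a (C1 x) (C2 x)).Nonempty := ⟨p, (Ksets_spec a x p).mpr hx⟩
  have ep : pickP a (C1 x, C2 x) = pickP a (C1 y, C2 y) := by rw [e1, e2]
  set pd := pickP a (C1 x, C2 x) with hpd
  have hpx : (x : WithOne S) * pd ∈ HQ a := (Ksets_spec a x pd).mp (pickP_mem (d := (C1 x, C2 x)) hKne)
  have hpy : (y : WithOne S) * pd ∈ HQ a := (sep_HQ part1 part2 pd).mp hpx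
  -- extract the third component equality
  have e3' : θ (coordW a _ hpx) = θ (coordW a _ hpy) := by
    unfold C3 at e3
    rw [← ep, ← hpd, dif_pos hpx, dif_pos hpy] at e3
    exact Option.some.inj e3
  -- left translation
  obtain ⟨u, hu⟩ : Ll x y := (lsetQ_eq_iff.mp part2).1
  have hux : u * ((x : WithOne S) * pd) ∈ HQ a := by
    rw [← mul_assoc, hu]; exact hpy
  have hmem := left_mem hpx hux
  have hua : u * (a : WithOne S) ∈ HQ a := hmem _ ⟨a, a_mem_Hcl a, rfl⟩
  set g := coordW a (u * (a : WithOne S)) hua with hg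
  have F1 : coordW a ((y : WithOne S) * pd) hpy = g * coordW a ((x : WithOne S) * pd) hpx := by
    have e : u * ((x : WithOne S) * pd) = (y : WithOne S) * pd := by rw [← mul_assoc, hu]
    rw [coordW_congr e.symm hpy hux]
    exact left_coord hua _ hpx hux
  have hux2 : u * ((x : WithOne S) * p) ∈ HQ a := hmem _ hx
  have F2 : coordW a ((y : WithOne S) * p) hy = g * coordW a ((x : WithOne S) * p) hx := by
    have e : u * ((x : WithOne S) * p) = (y : WithOne S) * p := by rw [← mul_assoc, hu]
    rw [coordW_congr e.symm hy hux2]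
    exact left_coord hua _ hx hux2
  set A := coordW a ((x : WithOne S) * pd) hpx with hA
  set B := coordW a ((x : WithOne S) * p) hx with hB
  have known : θ (g * A) = θ A := by rw [← F1]; exact e3'.symm
  rw [F2]
  symm
  obtain ⟨Ai, hAi1, hAi2⟩ := ginv A
  have hre : A * (Ai * B) = B := by rw [← mul_assoc, hAi1, one_mul]
  calc θ (g * B) = θ (g * (A * (Ai * B))) := by rw [hre]
    _ = θ ((g * A) * (Ai * B)) := by rw [mul_assoc]
    _ = θ (g * A) * θ (Ai * B) := map_mul θ _ _
    _ = θ A * θ (Ai * B) := by rw [known]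
    _ = θ (A * (Ai * B)) := (map_mul θ _ _).symm
    _ = θ B := by rw [hre]

theorem sepQuotient_finite {a : S} {F' : Type*} [Semigroup F'] [Finite F']
    (hL : {L : Set S | IsLeftIdeal L}.Finite) (hR : {R : Set S | IsRightIdeal R}.Finite)
    (θ : SchGroup (⊤ : Subsemigroup S) (Hcl a) →ₙ* F') :
    Finite (Quotient (sepSetoid a θ)) := by
  haveI : Finite (LIsub S) := by exact hL.to_subtype
  haveI : Finite (RIsub S) := by exact (RI_finite hR).to_subtype
  haveI : Finite (Option F') := by haveI := Fintype.ofFinite F'; infer_instance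
  have hwd : ∀ x y : S, sep a θ x y →
      (C1 x, C2 x, C3 a θ x) = (C1 y, C2 y, C3 a θ y) := by
    intro x y h
    rw [C1_sep h, C2_sep h, C3_sep h]
  refine Finite.of_injective (Quotient.lift _ hwd) ?_
  intro q1 q2
  refine Quotient.inductionOn₂ q1 q2 ?_
  intro x y h
  apply Quotient.sound
  have h' : (C1 x, C2 x, C3 a θ x) = (C1 y, C2 y, C3 a θ y) := h
  simp only [Prod.mk.injEq] at h'
  exact sep_of_C h'.1 h'.2.1 h'.2.2

end RFAux

namespace RFAux
variable {S : Type*} [Semigroup S]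
open GreenIndexPaper

def Wrap (n : ℕ) := Fin n

theorem finite_sep_hom {a x y : S} {F' : Type*} [Semigroup F'] [Finite F']
    (hL : {L : Set S | IsLeftIdeal L}.Finite) (hR : {R : Set S | IsRightIdeal R}.Finite)
    (θ : SchGroup (⊤ : Subsemigroup S) (Hcl a) →ₙ* F') (hnsep : ¬ sep a θ x y) :
    ∃ (F : Type) (_ : Semigroup F) (_ : Finite F) (φ : S →ₙ* F), φ x ≠ φ y := by
  haveI := sepQuotient_finite hL hR θ
  let ρ : S → Quotient (sepSetoid a θ) → Quotient (sepSetoid a θ) :=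
    fun s => Quotient.map (· * s) (fun u v h => sep_mul h s)
  let Ψ : S →ₙ* PairT (Quotient (sepSetoid a θ)) := {
    toFun := fun s => (Quotient.mk (sepSetoid a θ) s, ρ s),
    map_mul' := fun s t => by
      show (Quotient.mk _ (s * t), ρ (s * t)) = (ρ t (Quotient.mk _ s), fun q => ρ t (ρ s q))
      refine Prod.ext ?_ ?_
      · rfl
      · funext q
        induction q using Quotient.inductionOn with
        | h z =>
          show Quotient.mk _ (z * (s * t)) = Quotient.mk _ (z * s * t)
          rw [mul_assoc] }
  have hΨ : Ψ x ≠ Ψ y := fun e => hnsep (Quotient.exact (congrArg Prod.fst e))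
  obtain ⟨n, ⟨e0⟩⟩ := Finite.exists_equiv_fin (PairT (Quotient (sepSetoid a θ)))
  let e : PairT (Quotient (sepSetoid a θ)) ≃ Wrap n := by exact e0
  letI : Semigroup (Wrap n) :=
    { mul := fun k l => e (e.symm k * e.symm l),
      mul_assoc := by
        intro k l m
        show e (e.symm (e (e.symm k * e.symm l)) * e.symm m) =
          e (e.symm k * e.symm (e (e.symm l * e.symm m)))
        rw [Equiv.symm_apply_apply, Equiv.symm_apply_apply, mul_assoc] }
  refine ⟨Wrap n, inferInstance, inferInstanceAs (Finite (Fin n)),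
    ⟨fun s => e (Ψ s), fun s t => ?_⟩, fun h => hΨ (e.injective h)⟩
  show e (Ψ (s * t)) = e (e.symm (e (Ψ s)) * e.symm (e (Ψ t)))
  rw [Equiv.symm_apply_apply, Equiv.symm_apply_apply, map_mul]

theorem forward_rf (hRF : ResiduallyFiniteMul S) (H : Set S) :
    ResiduallyFiniteMul (SchGroup (⊤ : Subsemigroup S) H) := by
  intro X Y hXY
  induction X, Y using Con.induction_on₂ with
  | _ σ τ =>
  have hστ : ¬ (∀ h ∈ H, (h : WithOne S) * (σ : WithOne S) = (h : WithOne S) * (τ : WithOne S)) :=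
    fun h => hXY ((Con.eq _).mpr h)
  push_neg at hστ
  obtain ⟨h, hh, hne⟩ := hστ
  have hσH : ((h : WithOne S) * (σ : WithOne S)) ∈ ((↑) : S → WithOne S) '' H := by
    rw [← σ.2.2]; exact ⟨h, hh, rfl⟩
  have hτH : ((h : WithOne S) * (τ : WithOne S)) ∈ ((↑) : S → WithOne S) '' H := by
    rw [← τ.2.2]; exact ⟨h, hh, rfl⟩
  obtain ⟨h₁, h₁H, e₁⟩ := hσH
  obtain ⟨h₂, h₂H, e₂⟩ := hτH
  have hne12 : h₁ ≠ h₂ := fun e => hne (by rw [← e₁, ← e₂, e])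
  obtain ⟨F, iF1, iF2, φ, hφ⟩ := hRF h₁ h₂ hne12
  let φ1 : WithOne S →* WithOne F := WithOne.mapMulHom φ
  haveI := Fintype.ofFinite F
  haveI : Finite (Option F) := inferInstance
  haveI : Finite (WithOne F) := Finite.of_equiv (Option F) (Equiv.refl _)
  let D : Set (WithOne F) := {z | ∃ g ∈ H, z = φ1 (g : WithOne S)}
  haveI : Finite ↥D := Subtype.finite
  have hDcl : ∀ (σ' : stabSubmonoid (⊤ : Subsemigroup S) H) (z : ↥D),
      (z : WithOne F) * φ1 (σ' : WithOne S) ∈ D := by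
    rintro σ' ⟨z, g, hg, rfl⟩
    have hmem : ((g : WithOne S) * (σ' : WithOne S)) ∈ ((↑) : S → WithOne S) '' H := by
      rw [← σ'.2.2]; exact ⟨g, hg, rfl⟩
    obtain ⟨g', hg', eg'⟩ := hmem
    exact ⟨g', hg', by rw [← map_mul, ← eg']⟩
  let μ : stabSubmonoid (⊤ : Subsemigroup S) H →* REnd ↥D := {
    toFun := fun σ' => fun z => ⟨(z : WithOne F) * φ1 (σ' : WithOne S), hDcl σ' z⟩,
    map_one' := funext fun z => Subtype.ext (by
      show (z : WithOne F) * φ1 ((1 : stabSubmonoid ⊤ H) : WithOne S) = (z : WithOne F)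
      have : ((1 : stabSubmonoid (⊤ : Subsemigroup S) H) : WithOne S) = 1 := rfl
      rw [this, map_one, mul_one]),
    map_mul' := fun σ' τ' => funext fun z => Subtype.ext (by
      show (z : WithOne F) * φ1 ((σ' * τ' : stabSubmonoid ⊤ H) : WithOne S) =
        ((z : WithOne F) * φ1 (σ' : WithOne S)) * φ1 (τ' : WithOne S)
      have : ((σ' * τ' : stabSubmonoid (⊤ : Subsemigroup S) H) : WithOne S) =
        (σ' : WithOne S) * (τ' : WithOne S) := rfl
      rw [this, map_mul, mul_assoc]) }
  have hker : gammaCon (⊤ : Subsemigroup S) H ≤ Con.ker μ := by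
    intro σ' τ' hγ
    show μ σ' = μ τ'
    funext z
    obtain ⟨zv, g, hg, rfl⟩ := z
    apply Subtype.ext
    show φ1 (g : WithOne S) * φ1 (σ' : WithOne S) = φ1 (g : WithOne S) * φ1 (τ' : WithOne S)
    rw [← map_mul, ← map_mul, hγ g hg]
  let θq := (gammaCon (⊤ : Subsemigroup S) H).lift μ hker
  refine ⟨REnd ↥D, inferInstance, inferInstance, θq.toMulHom, ?_⟩
  intro hcontra
  have hz₀ : φ1 ((h : WithOne S)) ∈ D := ⟨h, hh, rfl⟩
  have h1 : θq ↑σ = μ σ := Con.lift_coe hker σ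
  have h2 : θq ↑τ = μ τ := Con.lift_coe hker τ
  have : μ σ ⟨_, hz₀⟩ = μ τ ⟨_, hz₀⟩ := by
    rw [← h1, ← h2]
    exact congrFun hcontra ⟨_, hz₀⟩
  have hval : φ1 ((h : WithOne S)) * φ1 (σ : WithOne S) =
      φ1 ((h : WithOne S)) * φ1 (τ : WithOne S) := congrArg Subtype.val this
  rw [← map_mul, ← map_mul, ← e₁, ← e₂] at hval
  have : ((φ h₁ : F) : WithOne F) = ((φ h₂ : F) : WithOne F) := by
    have c1 : φ1 ((h₁ : S) : WithOne S) = ((φ h₁ : F) : WithOne F) := WithOne.mapMulHom_coe φ h₁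
    have c2 : φ1 ((h₂ : S) : WithOne S) = ((φ h₂ : F) : WithOne F) := WithOne.mapMulHom_coe φ h₂
    rw [← c1, ← c2, hval]
  exact hφ (WithOne.coe_inj.mp this)

end RFAux

/-- a semigroup with finitely many left and right ideals is residually
finite iff all its Schützenberger groups are residually finite. -/
theorem residually_finite_iff_schGroups
    (S : Type*) [Semigroup S]
    (hL : {L : Set S | IsLeftIdeal L}.Finite) (hR : {R : Set S | IsRightIdeal R}.Finite) :
    ResiduallyFiniteMul S ↔
      ∀ H : Set S, IsHClassIn (⊤ : Subsemigroup S) H →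
        ResiduallyFiniteMul (SchGroup (⊤ : Subsemigroup S) H) := by
  constructor
  · intro hRF H _
    exact RFAux.forward_rf hRF H
  · intro hsch x y hxy
    by_cases hHr : HrelT (⊤ : Subsemigroup S) x y
    · have hx : x ∈ RFAux.Hcl x := RFAux.a_mem_Hcl x
      have hy : y ∈ RFAux.Hcl x := hHr
      have hXmem : ((x : WithOne S)) ∈ RFAux.HQ x := ⟨x, hx, rfl⟩
      have hYmem : ((y : WithOne S)) ∈ RFAux.HQ x := ⟨y, hy, rfl⟩
      have hne : RFAux.coordW x (x : WithOne S) hXmem ≠ RFAux.coordW x (y : WithOne S) hYmem := by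
        intro e
        obtain ⟨σ, hσ, eσ⟩ := RFAux.coordW_out hXmem
        obtain ⟨τ, hτ, eτ⟩ := RFAux.coordW_out hYmem
        rw [eσ, eτ] at e
        have hγ := (Con.eq _).mp e x hx
        apply hxy
        have : ((x : WithOne S)) = (y : WithOne S) := by
          rw [← hσ, ← hτ]; exact hγ
        exact WithOne.coe_inj.mp this
      have hcls : IsHClassIn (⊤ : Subsemigroup S) (RFAux.Hcl x) := ⟨x, rfl⟩
      obtain ⟨F', iF1, iF2, θ, hθ⟩ := hsch (RFAux.Hcl x) hcls _ _ hne
      have hnsep : ¬ RFAux.sep x θ x y := by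
        rintro ⟨-, -, h3⟩
        have h1 : ((x : WithOne S)) * 1 ∈ RFAux.HQ x := by rw [mul_one]; exact hXmem
        have h2 : ((y : WithOne S)) * 1 ∈ RFAux.HQ x := by rw [mul_one]; exact hYmem
        have hval := h3 1 h1 h2
        rw [RFAux.coordW_congr (mul_one _) h1 hXmem,
          RFAux.coordW_congr (mul_one _) h2 hYmem] at hval
        exact hθ hval
      exact RFAux.finite_sep_hom hL hR θ hnsep
    · let θtriv : SchGroup (⊤ : Subsemigroup S) (RFAux.Hcl x) →ₙ* Unit :=
        ⟨fun _ => (), fun _ _ => rfl⟩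
      have hnsep : ¬ RFAux.sep x θtriv x y := by
        rintro ⟨h1, h2, -⟩
        apply hHr
        constructor
        · exact RFAux.rrelT_iff.mpr (RFAux.rsetQ_eq_iff.mp
            (by rw [← RFAux.lmulW_univ, ← RFAux.lmulW_univ, h1 _ RFAux.univ_mem_RI]))
        · exact RFAux.lrelT_iff.mpr (RFAux.lsetQ_eq_iff.mp h2)
      exact RFAux.finite_sep_hom hL hR θtriv hnsep
end
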